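/- arXiv:2508.13824 — 14 statements merged into one kernel-verified Lean document; each statement's English description precedes it below -/
import Mathlib

section
/- For every p with 0 ≤ p ≤ N one has Σ_{q=0}^{N} κ_{pq} = ψ_p, and for every q with 0 ≤ q ≤ N one has Σ_{p=0}^{N} κ_{pq} = ψ̃_q. (Row sums of the ADER-DG matrix κ give the left boundary values ψ of the Lagrange basis and column sums give the right boundary values ψ̃.) -/
open scoped BigOperators

/-- Row sums of the ADER-DG matrix κ give the left boundary
values ψ of the Lagrange basis, and column sums give the right boundary
values ψ̃. -/
theorem aderdg_kappa_row_col_sums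
    (N : ℕ) (τ : Fin (N + 1) → ℝ) (hτ : Function.Injective τ)
    (φ : Fin (N + 1) → ℝ → ℝ)
    (hφ : ∀ p x, φ p x = ∏ k ∈ Finset.univ.erase p, (x - τ k) / (τ p - τ k))
    (ψ ψt : Fin (N + 1) → ℝ)
    (hψ : ∀ p, ψ p = φ p 0) (hψt : ∀ p, ψt p = φ p 1)
    (κ : Matrix (Fin (N + 1)) (Fin (N + 1)) ℝ)
    (hκ : ∀ p q, κ p q = ψt p * ψt q - ∫ x in (0:ℝ)..1, deriv (φ p) x * φ q x) :
    (∀ p, ∑ q, κ p q = ψ p) ∧ (∀ q, ∑ p, κ p q = ψt q) := by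
  set P : Fin (N + 1) → Polynomial ℝ := fun p => Lagrange.basis Finset.univ τ p with hP
  have hφeval : ∀ p x, φ p x = (P p).eval x := by
    intro p x
    rw [hφ, hP]
    simp only [Lagrange.basis, Polynomial.eval_prod]
    refine Finset.prod_congr rfl fun k _ => ?_
    simp [Lagrange.basisDivisor, div_eq_inv_mul]
  have hφfun : ∀ p, φ p = fun x => (P p).eval x := fun p => funext (hφeval p)
  have hderiv : ∀ p x, HasDerivAt (φ p) ((P p).derivative.eval x) x := by
    intro p x; rw [hφfun p]; exact (P p).hasDerivAt x
  have hderiv' : ∀ p x, deriv (φ p) x = (P p).derivative.eval x :=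
    fun p x => (hderiv p x).deriv
  have hsumP : ∑ p, P p = 1 :=
    Lagrange.sum_basis hτ.injOn Finset.univ_nonempty
  have hsum1 : ∀ x : ℝ, ∑ q, φ q x = 1 := by
    intro x
    simp_rw [hφeval, ← Polynomial.eval_finset_sum, hsumP, Polynomial.eval_one]
  have hintg : ∀ p q, IntervalIntegrable (fun x => deriv (φ p) x * φ q x)
      MeasureTheory.volume 0 1 := by
    intro p q
    apply Continuous.intervalIntegrable
    have : (fun x => deriv (φ p) x * φ q x)
        = fun x => (P p).derivative.eval x * (P q).eval x := by
      funext x; rw [hderiv', hφeval]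
    rw [this]
    exact ((P p).derivative.continuous_aeval).mul ((P q).continuous_aeval)
  constructor
  · intro p
    simp_rw [hκ]
    rw [Finset.sum_sub_distrib, ← Finset.mul_sum,
      ← intervalIntegral.integral_finset_sum (fun q _ => hintg p q)]
    have he : ∀ x : ℝ, ∑ q, deriv (φ p) x * φ q x = deriv (φ p) x := by
      intro x; rw [← Finset.mul_sum, hsum1, mul_one]
    rw [intervalIntegral.integral_congr (fun x _ => he x)]
    rw [intervalIntegral.integral_deriv_eq_sub (fun x _ => (hderiv p x).differentiableAt)]
    · have : ∑ q, ψt q = 1 := by simp_rw [hψt]; exact hsum1 1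
      rw [this, hψt, hψ]; ring
    · apply Continuous.intervalIntegrable
      have : deriv (φ p) = fun x => (P p).derivative.eval x := funext (hderiv' p)
      rw [this]; exact (P p).derivative.continuous_aeval
  · intro q
    simp_rw [hκ]
    rw [Finset.sum_sub_distrib, ← Finset.sum_mul,
      ← intervalIntegral.integral_finset_sum (fun p _ => hintg p q)]
    have he : ∀ x : ℝ, ∑ p, deriv (φ p) x * φ q x = 0 := by
      intro x
      simp_rw [hderiv']
      rw [← Finset.sum_mul, ← Polynomial.eval_finset_sum,
        ← Polynomial.derivative_sum, hsumP]
      simp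
    rw [intervalIntegral.integral_congr (fun x _ => he x)]
    have : ∑ p, ψt p = 1 := by simp_rw [hψt]; exact hsum1 1
    rw [this]
    simp
end

section
/- If the matrix κ is invertible, then Σ_{q=0}^{N} (κ⁻¹)_{pq} ψ_q = 1 for every p, and Σ_{p=0}^{N} (κ⁻¹)_{pq} ψ̃_p = 1 for every q. Equivalently, κ⁻¹ ψ is the all-ones vector and (κ⁻¹)ᵀ ψ̃ is the all-ones vector. -/
open scoped BigOperators
open Polynomial

/-- If κ is invertible, then κ⁻¹ ψ is the all-ones vector and
(κ⁻¹)ᵀ ψ̃ is the all-ones vector. -/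
theorem aderdg_kappa_inv_ones
    (N : ℕ) (τ : Fin (N + 1) → ℝ) (hτ : Function.Injective τ)
    (φ : Fin (N + 1) → ℝ → ℝ)
    (hφ : ∀ p x, φ p x = ∏ k ∈ Finset.univ.erase p, (x - τ k) / (τ p - τ k))
    (ψ ψt : Fin (N + 1) → ℝ)
    (hψ : ∀ p, ψ p = φ p 0) (hψt : ∀ p, ψt p = φ p 1)
    (κ : Matrix (Fin (N + 1)) (Fin (N + 1)) ℝ)
    (hκ : ∀ p q, κ p q = ψt p * ψt q - ∫ x in (0:ℝ)..1, deriv (φ p) x * φ q x)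
    (hinv : IsUnit κ.det) :
    (∀ p, ∑ q, κ⁻¹ p q * ψ q = 1) ∧ (∀ q, ∑ p, κ⁻¹ p q * ψt p = 1) := by
  set P : Fin (N + 1) → ℝ[X] := fun p => Lagrange.basis Finset.univ τ p with hP
  have hφP : ∀ p, φ p = fun x => (P p).eval x := by
    intro p; funext x
    simp only [hP]
    rw [hφ, Lagrange.basis, eval_prod]
    refine Finset.prod_congr rfl fun k hk => ?_
    simp [Lagrange.basisDivisor, div_eq_inv_mul, mul_comm]
  have hsum : (∑ p, P p) = 1 :=
    Lagrange.sum_basis hτ.injOn Finset.univ_nonempty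
  have hsumx : ∀ x : ℝ, (∑ p, φ p x) = 1 := by
    intro x
    have := congrArg (eval x) hsum
    simpa [eval_finset_sum, hφP] using this
  have hderiv : ∀ p, deriv (φ p) = fun x => (P p).derivative.eval x := by
    intro p; funext x; rw [hφP]; exact (P p).deriv
  -- row sums: ∑ q, κ p q = ψ p
  have hrow : ∀ p, (∑ q, κ p q) = ψ p := by
    intro p
    have hint : ∀ q : Fin (N+1), IntervalIntegrable
        (fun x => deriv (φ p) x * φ q x) MeasureTheory.volume 0 1 := by
      intro q
      rw [hderiv, hφP]
      exact (((P p).derivative.continuous_aeval.mul (P q).continuous_aeval)).intervalIntegrable 0 1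
    have h1 : (∑ q, ∫ x in (0:ℝ)..1, deriv (φ p) x * φ q x)
        = ∫ x in (0:ℝ)..1, deriv (φ p) x := by
      rw [← intervalIntegral.integral_finset_sum (fun q _ => hint q)]
      congr 1; funext x
      rw [← Finset.mul_sum, hsumx, mul_one]
    have h2 : (∫ x in (0:ℝ)..1, deriv (φ p) x) = φ p 1 - φ p 0 := by
      apply intervalIntegral.integral_deriv_eq_sub
      · intro x _; rw [hφP]; exact (P p).differentiable_aeval.differentiableAt
      · rw [hderiv]
        exact ((P p).derivative.continuous_aeval.intervalIntegrable 0 1)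
    simp only [hκ, Finset.sum_sub_distrib, ← Finset.mul_sum]
    have hψt1 : (∑ q, ψt q) = 1 := by simp only [hψt]; exact hsumx 1
    rw [h1, h2, hψt1, mul_one, hψt, hψ]; ring
  -- column sums: ∑ p, κ p q = ψt q
  have hcol : ∀ q, (∑ p, κ p q) = ψt q := by
    intro q
    have hint : ∀ p : Fin (N+1), IntervalIntegrable
        (fun x => deriv (φ p) x * φ q x) MeasureTheory.volume 0 1 := by
      intro p
      rw [hderiv, hφP]
      exact (((P p).derivative.continuous_aeval.mul (P q).continuous_aeval)).intervalIntegrable 0 1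
    have hdsum : ∀ x : ℝ, (∑ p, deriv (φ p) x) = 0 := by
      intro x
      have : (∑ p, (P p).derivative) = 0 := by
        rw [← derivative_sum, hsum, derivative_one]
      calc (∑ p, deriv (φ p) x) = (∑ p, (P p).derivative).eval x := by
            simp [hderiv, eval_finset_sum]
        _ = 0 := by rw [this, eval_zero]
    have h1 : (∑ p, ∫ x in (0:ℝ)..1, deriv (φ p) x * φ q x) = 0 := by
      rw [← intervalIntegral.integral_finset_sum (fun p _ => hint p)]
      have : (fun x => ∑ p, deriv (φ p) x * φ q x) = fun _ : ℝ => (0:ℝ) := by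
        funext x; rw [← Finset.sum_mul, hdsum, zero_mul]
      rw [this, intervalIntegral.integral_zero]
    simp only [hκ, Finset.sum_sub_distrib, ← Finset.sum_mul]
    have hψt1 : (∑ p, ψt p) = 1 := by simp only [hψt]; exact hsumx 1
    rw [h1, hψt1, one_mul, sub_zero]
  -- matrix algebra
  have hmul : κ.mulVec (fun _ => 1) = ψ := by
    funext p; simpa [Matrix.mulVec, dotProduct] using hrow p
  have hvec : Matrix.vecMul (fun _ => 1) κ = ψt := by
    funext q; simpa [Matrix.vecMul, dotProduct] using hcol q
  have hinvmul : κ⁻¹ * κ = 1 := Matrix.nonsing_inv_mul κ hinv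
  have hmulinv : κ * κ⁻¹ = 1 := Matrix.mul_nonsing_inv κ hinv
  constructor
  · intro p
    have : κ⁻¹.mulVec ψ = fun _ => (1:ℝ) := by
      rw [← hmul, Matrix.mulVec_mulVec, hinvmul, Matrix.one_mulVec]
    simpa [Matrix.mulVec, dotProduct] using congrFun this p
  · intro q
    have : Matrix.vecMul ψt κ⁻¹ = fun _ => (1:ℝ) := by
      rw [← hvec, Matrix.vecMul_vecMul, hmulinv, Matrix.vecMul_one]
    have := congrFun this q
    simp only [Matrix.vecMul, dotProduct] at this
    rw [← this]
    exact Finset.sum_congr rfl fun p _ => mul_comm _ _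
end

section
/- For every q with 0 ≤ q ≤ N one has Σ_{p=0}^{N} a_{pq} ψ̃_p = w_q, i.e. aᵀ ψ̃ = w: the right endpoint values ψ̃ of the Lagrange basis reproduce the quadrature weights through the transpose of the ADER-DG Runge–Kutta matrix a. -/
open scoped BigOperators

/-- aᵀ ψ̃ = w, where a = κ⁻¹ ⬝ diag(w) is the coefficient matrix of
the IRK-GL-ADER-DG Runge–Kutta method. -/
theorem aderdg_a_transpose_psit_eq_w
    (N : ℕ) (τ : Fin (N + 1) → ℝ) (hτ : Function.Injective τ)
    (φ : Fin (N + 1) → ℝ → ℝ)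
    (hφ : ∀ p x, φ p x = ∏ k ∈ Finset.univ.erase p, (x - τ k) / (τ p - τ k))
    (ψ ψt w : Fin (N + 1) → ℝ)
    (hψ : ∀ p, ψ p = φ p 0) (hψt : ∀ p, ψt p = φ p 1)
    (hw : ∀ p, w p = ∫ x in (0:ℝ)..1, φ p x)
    (κ : Matrix (Fin (N + 1)) (Fin (N + 1)) ℝ)
    (hκ : ∀ p q, κ p q = ψt p * ψt q - ∫ x in (0:ℝ)..1, deriv (φ p) x * φ q x)
    (hinv : IsUnit κ.det)
    (a : Matrix (Fin (N + 1)) (Fin (N + 1)) ℝ)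
    (ha : a = κ⁻¹ * Matrix.diagonal w) :
    ∀ q, ∑ p, a p q * ψt p = w q := by
  classical
  -- φ p is evaluation of the Lagrange basis polynomial
  have hpoly : ∀ p x, φ p x = (Lagrange.basis Finset.univ τ p).eval x := by
    intro p x
    rw [hφ, Lagrange.basis, Polynomial.eval_prod]
    refine Finset.prod_congr rfl fun k _ => ?_
    simp [Lagrange.basisDivisor, div_eq_inv_mul, mul_comm]
  have hfun : ∀ p, φ p = fun x => (Lagrange.basis Finset.univ τ p).eval x := by
    intro p; funext x; exact hpoly p x
  -- partition of unity
  have hsum1 : ∀ x : ℝ, ∑ p, φ p x = 1 := by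
    intro x
    have h := Lagrange.sum_basis (v := τ) (s := Finset.univ) hτ.injOn
      Finset.univ_nonempty
    calc ∑ p, φ p x = (∑ p, Lagrange.basis Finset.univ τ p).eval x := by
          rw [Polynomial.eval_finset_sum]; exact Finset.sum_congr rfl fun p _ => hpoly p x
      _ = 1 := by rw [h, Polynomial.eval_one]
  -- differentiability
  have hdiff : ∀ p, Differentiable ℝ (φ p) := by
    intro p; rw [hfun p]; exact (Lagrange.basis Finset.univ τ p).differentiable
  -- sum of derivatives is zero
  have hderivsum : ∀ x : ℝ, ∑ p, deriv (φ p) x = 0 := by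
    intro x
    have : deriv (fun y => ∑ p, φ p y) x = ∑ p, deriv (φ p) x :=
      deriv_fun_sum fun p _ => (hdiff p).differentiableAt
    rw [← this]
    have : (fun y => ∑ p, φ p y) = fun _ => (1:ℝ) := by funext y; exact hsum1 y
    rw [this, deriv_const]
  -- continuity of integrands
  have hcont : ∀ p q, Continuous fun x => deriv (φ p) x * φ q x := by
    intro p q
    have h1 : deriv (φ p) = fun x => (Lagrange.basis Finset.univ τ p).derivative.eval x := by
      funext x; rw [hfun p]; exact Polynomial.deriv _
    rw [h1, hfun q]
    exact ((Lagrange.basis Finset.univ τ p).derivative.continuous).mul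
      (Lagrange.basis Finset.univ τ q).continuous
  -- column sums of κ equal ψt
  have hcol : ∀ q, ∑ p, κ p q = ψt q := by
    intro q
    have hsum_psit : ∑ p, ψt p = 1 := by
      rw [show ∑ p, ψt p = ∑ p, φ p 1 from Finset.sum_congr rfl fun p _ => hψt p]
      exact hsum1 1
    have hint : ∑ p, (∫ x in (0:ℝ)..1, deriv (φ p) x * φ q x) = 0 := by
      rw [← intervalIntegral.integral_finset_sum fun p _ =>
        ((hcont p q).intervalIntegrable 0 1)]
      have : (fun x => ∑ p, deriv (φ p) x * φ q x) = fun _ => (0:ℝ) := by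
        funext x; rw [← Finset.sum_mul, hderivsum x, zero_mul]
      rw [this]; simp
    calc ∑ p, κ p q
        = ∑ p, (ψt p * ψt q - ∫ x in (0:ℝ)..1, deriv (φ p) x * φ q x) :=
          Finset.sum_congr rfl fun p _ => hκ p q
      _ = (∑ p, ψt p) * ψt q - ∑ p, (∫ x in (0:ℝ)..1, deriv (φ p) x * φ q x) := by
          rw [Finset.sum_sub_distrib, Finset.sum_mul]
      _ = ψt q := by rw [hsum_psit, hint, one_mul, sub_zero]
  -- linear algebra conclusion
  have hone : Matrix.vecMul (fun _ => (1:ℝ)) κ = ψt := by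
    funext q
    rw [Matrix.vecMul, dotProduct]
    simpa using hcol q
  have hinvmul : κ * κ⁻¹ = 1 := Matrix.mul_nonsing_inv κ hinv
  have hpsit_inv : Matrix.vecMul ψt κ⁻¹ = fun _ => (1:ℝ) := by
    rw [← hone, Matrix.vecMul_vecMul, hinvmul, Matrix.vecMul_one]
  intro q
  have : Matrix.vecMul ψt a q = w q := by
    rw [ha, ← Matrix.vecMul_vecMul, hpsit_inv, Matrix.vecMul_diagonal, one_mul]
  rw [← this, Matrix.vecMul, dotProduct]
  exact Finset.sum_congr rfl fun p _ => mul_comm _ _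
end

section
/- The trace of κ satisfies tr(κ) = Σ_{p=0}^{N} κ_{pp} = (1/2) Σ_{p=0}^{N} (ψ_p² + ψ̃_p²). If moreover the nodes are symmetric about 1/2, i.e. τ_p = 1 − τ_{N−p} for all p, then tr(κ) = Σ_{p=0}^{N} ψ_p² = Σ_{p=0}^{N} ψ̃_p². -/
open scoped BigOperators
open Polynomial

lemma key_int (P : ℝ[X]) :
    ∫ x in (0:ℝ)..1, (P.derivative.eval x) * P.eval x
      = P.eval 1 ^ 2 / 2 - P.eval 0 ^ 2 / 2 := by
  have h : ∀ x ∈ Set.uIcc (0:ℝ) 1, HasDerivAt (fun y => P.eval y ^ 2 / 2)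
      (P.derivative.eval x * P.eval x) x := by
    intro x _
    have : HasDerivAt (fun y => P.eval y ^ 2 / 2)
        ((2 : ℕ) * P.eval x ^ (2 - 1) * P.derivative.eval x / 2) x :=
      ((P.hasDerivAt x).pow 2).div_const 2
    convert this using 1
    push_cast
    ring
  have hcont : IntervalIntegrable (fun x => P.derivative.eval x * P.eval x)
      MeasureTheory.volume 0 1 :=
    ((P.derivative.continuous_aeval).mul P.continuous_aeval).intervalIntegrable _ _
  simpa using intervalIntegral.integral_eq_sub_of_hasDerivAt h hcont

/-- tr(κ) = (1/2) Σ (ψ_p² + ψ̃_p²); and if the nodes are symmetric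
about 1/2 (τ_p = 1 − τ_{N−p}), then tr(κ) = Σ ψ_p² = Σ ψ̃_p². -/
theorem aderdg_kappa_trace
    (N : ℕ) (τ : Fin (N + 1) → ℝ) (hτ : Function.Injective τ)
    (φ : Fin (N + 1) → ℝ → ℝ)
    (hφ : ∀ p x, φ p x = ∏ k ∈ Finset.univ.erase p, (x - τ k) / (τ p - τ k))
    (ψ ψt : Fin (N + 1) → ℝ)
    (hψ : ∀ p, ψ p = φ p 0) (hψt : ∀ p, ψt p = φ p 1)
    (κ : Matrix (Fin (N + 1)) (Fin (N + 1)) ℝ)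
    (hκ : ∀ p q, κ p q = ψt p * ψt q - ∫ x in (0:ℝ)..1, deriv (φ p) x * φ q x) :
    (∑ p, κ p p = (1 / 2) * ∑ p, (ψ p ^ 2 + ψt p ^ 2)) ∧
      ((∀ p, τ p = 1 - τ p.rev) →
        (∑ p, κ p p = ∑ p, ψ p ^ 2) ∧ (∑ p, κ p p = ∑ p, ψt p ^ 2)) := by
  have hpoly : ∀ p, ∃ P : ℝ[X], ∀ x, φ p x = P.eval x := by
    intro p
    refine ⟨(∏ k ∈ Finset.univ.erase p, C (τ p - τ k)⁻¹) *
      ∏ k ∈ Finset.univ.erase p, (X - C (τ k)), fun x => ?_⟩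
    rw [hφ]
    simp [div_eq_mul_inv, Finset.prod_mul_distrib, eval_prod, mul_comm]
  have hdiag : ∀ p, κ p p = (ψ p ^ 2 + ψt p ^ 2) / 2 := by
    intro p
    obtain ⟨P, hP⟩ := hpoly p
    have hfe : φ p = fun x => P.eval x := funext hP
    have hint : (∫ x in (0:ℝ)..1, deriv (φ p) x * φ p x)
        = φ p 1 ^ 2 / 2 - φ p 0 ^ 2 / 2 := by
      rw [hfe]
      simp only [Polynomial.deriv]
      exact key_int P
    rw [hκ, hint, hψ, hψt]
    ring
  have h1 : ∑ p, κ p p = (1 / 2) * ∑ p, (ψ p ^ 2 + ψt p ^ 2) := by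
    rw [Finset.mul_sum]
    exact Finset.sum_congr rfl fun p _ => by rw [hdiag p]; ring
  refine ⟨h1, fun hsym => ?_⟩
  have hrev : ∀ p, ψ p = ψt p.rev := by
    intro p
    rw [hψ, hψt, hφ, hφ]
    refine Finset.prod_bij' (fun k _ => k.rev) (fun k _ => k.rev) ?_ ?_ ?_ ?_ ?_
    · intro k hk
      simp only [Finset.mem_erase, Finset.mem_univ, and_true] at hk ⊢
      simpa [Fin.rev_inj] using hk
    · intro k hk
      simp only [Finset.mem_erase, Finset.mem_univ, and_true] at hk ⊢
      intro h
      exact hk (by rw [← h, Fin.rev_rev])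
    · intro k _; exact Fin.rev_rev k
    · intro k _; exact Fin.rev_rev k
    · intro k _
      rw [hsym p, hsym k,
        show (0:ℝ) - (1 - τ k.rev) = -(1 - τ k.rev) by ring,
        show (1 - τ p.rev) - (1 - τ k.rev) = -(τ p.rev - τ k.rev) by ring,
        neg_div_neg_eq]
  have heq : ∑ p, ψ p ^ 2 = ∑ p, ψt p ^ 2 := by
    calc ∑ p, ψ p ^ 2 = ∑ p : Fin (N+1), ψt p.rev ^ 2 := by simp [hrev]
      _ = ∑ p, ψt p ^ 2 := Fintype.sum_equiv Fin.revPerm _ _ (fun p => rfl)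
  constructor
  · rw [h1, Finset.sum_add_distrib, ← heq]; ring
  · rw [h1, Finset.sum_add_distrib, heq]; ring
end

section
/- Suppose u_n ∈ ℝ^D and vectors q̂_0,…,q̂_N, F_0,…,F_N ∈ ℝ^D satisfy the local DG predictor system Σ_{q=0}^{N} κ_{pq} q̂_q = ψ_p u_n + w_p F_p for every p. Then the value of the local solution at the right endpoint equals the quadrature update of the ADER-DG method: Σ_{p=0}^{N} ψ̃_p q̂_p = u_n + Σ_{p=0}^{N} w_p F_p. -/
open scoped BigOperators

/-- If the coefficients q̂ solve the local DG predictor system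
Σ_q κ_{pq} q̂_q = ψ_p uₙ + w_p F_p, then the local solution at the right
endpoint equals the quadrature update: Σ_p ψt_p q̂_p = uₙ + Σ_p w_p F_p. -/
theorem aderdg_right_endpoint_eq_quadrature_update
    (N D : ℕ) (τ : Fin (N + 1) → ℝ) (hτ : Function.Injective τ)
    (φ : Fin (N + 1) → ℝ → ℝ)
    (hφ : ∀ p x, φ p x = ∏ k ∈ Finset.univ.erase p, (x - τ k) / (τ p - τ k))
    (ψ ψt w : Fin (N + 1) → ℝ)
    (hψ : ∀ p, ψ p = φ p 0) (hψt : ∀ p, ψt p = φ p 1)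
    (hw : ∀ p, w p = ∫ x in (0:ℝ)..1, φ p x)
    (κ : Matrix (Fin (N + 1)) (Fin (N + 1)) ℝ)
    (hκ : ∀ p q, κ p q = ψt p * ψt q - ∫ x in (0:ℝ)..1, deriv (φ p) x * φ q x)
    (u : Fin D → ℝ) (qhat F : Fin (N + 1) → Fin D → ℝ)
    (hsys : ∀ p, ∑ q, κ p q • qhat q = ψ p • u + w p • F p) :
    ∑ p, ψt p • qhat p = u + ∑ p, w p • F p := by
  classical
  -- φ p is the Lagrange basis polynomial
  set P : Fin (N + 1) → Polynomial ℝ := fun p => Lagrange.basis Finset.univ τ p with hP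
  have hφP : ∀ p, φ p = fun x => (P p).eval x := by
    intro p
    funext x
    rw [hφ]; simp only [hP, Lagrange.basis, Polynomial.eval_prod]
    refine Finset.prod_congr rfl fun k hk => ?_
    simp [Lagrange.basisDivisor, div_eq_inv_mul, mul_comm]
  have hsumP : ∑ p, P p = 1 :=
    Lagrange.sum_basis (hτ.injOn) Finset.univ_nonempty
  have hsumφ : ∀ x : ℝ, ∑ p, φ p x = 1 := by
    intro x
    have := congrArg (Polynomial.eval x) hsumP
    simpa [Polynomial.eval_finset_sum, hφP] using this
  have hψsum : ∑ p, ψ p = 1 := by simp only [hψ]; exact hsumφ 0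
  have hψtsum : ∑ p, ψt p = 1 := by simp only [hψt]; exact hsumφ 1
  -- derivatives sum to zero
  have hderiv : ∀ p (x : ℝ), deriv (φ p) x = ((P p).derivative).eval x := by
    intro p x
    rw [hφP p, Polynomial.deriv]
  have hderivsum : ∀ x : ℝ, ∑ p, deriv (φ p) x = 0 := by
    intro x
    have : ∑ p, ((P p).derivative).eval x
        = ((∑ p, P p).derivative).eval x := by
      simp [Polynomial.derivative_sum, Polynomial.eval_finset_sum]
    simp only [hderiv]
    rw [this, hsumP]
    simp
  -- column sums of κ
  have hκcol : ∀ q, ∑ p, κ p q = ψt q := by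
    intro q
    have hint : ∀ p, IntervalIntegrable (fun x => deriv (φ p) x * φ q x)
        MeasureTheory.volume 0 1 := by
      intro p
      apply Continuous.intervalIntegrable
      have h1 : Continuous (fun x => deriv (φ p) x) := by
        simp only [hderiv]; exact (P p).derivative.continuous_aeval
      have h2 : Continuous (φ q) := by rw [hφP]; exact (P q).continuous_aeval
      exact h1.mul h2
    simp only [hκ]
    rw [Finset.sum_sub_distrib, ← Finset.sum_mul, hψtsum, one_mul,
      ← intervalIntegral.integral_finset_sum (fun p _ => hint p)]
    have : (∫ x in (0:ℝ)..1, ∑ p, deriv (φ p) x * φ q x) = 0 := by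
      rw [intervalIntegral.integral_congr (g := fun _ => (0:ℝ))]
      · simp
      · intro x _
        show ∑ p, deriv (φ p) x * φ q x = 0
        rw [← Finset.sum_mul, hderivsum, zero_mul]
    rw [this, sub_zero]
  -- sum the system over p
  have hkey := Finset.sum_congr rfl (fun p (_ : p ∈ Finset.univ) => hsys p)
  rw [Finset.sum_comm] at hkey
  have hL : ∑ q, ∑ p, κ p q • qhat q = ∑ q, ψt q • qhat q := by
    refine Finset.sum_congr rfl fun q _ => ?_
    rw [← Finset.sum_smul, hκcol]
  have hR : ∑ p, (ψ p • u + w p • F p) = u + ∑ p, w p • F p := by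
    rw [Finset.sum_add_distrib, ← Finset.sum_smul, hψsum, one_smul]
  rw [hL, hR] at hkey
  exact hkey
end

section
/- Let N ≥ 1, assume the Gauss–Legendre quadrature property and that κ is invertible. Let f be a real polynomial with deg f ≤ N − 1, let u₀ ∈ ℝ, and let u(τ) = u₀ + ∫₀^τ f(s) ds be the exact solution of the ODE u′ = f(τ), u(0) = u₀. Then the vector q̂ with entries q̂_p = u(τ_p) is the unique solution of the local DG predictor system Σ_{q=0}^{N} κ_{pq} q̂_q = ψ_p u₀ + w_p f(τ_p) (0 ≤ p ≤ N), and consequently the local DG solution Σ_{p=0}^{N} q̂_p φ_p(τ) equals u(τ) identically: the local DG predictor is exact for polynomial right-hand sides of degree less than N. -/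
open scoped BigOperators
open Polynomial

lemma aderdg_poly_ftc (p : Polynomial ℝ) (a b : ℝ) :
    (∫ x in a..b, p.derivative.eval x) = p.eval b - p.eval a := by
  have h : _root_.deriv (fun x : ℝ => p.eval x) = fun x => p.derivative.eval x := by
    funext x; exact Polynomial.deriv (𝕜 := ℝ) (p := p) (x := x)
  exact intervalIntegral.integral_deriv_eq_sub' _ h (fun x _ => p.differentiableAt)
    p.derivative.continuous.continuousOn

noncomputable def aderdgAntider (f : Polynomial ℝ) : Polynomial ℝ :=
  f.sum fun n a => C (a / (n + 1)) * X ^ (n + 1)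

lemma aderdgAntider_deriv (f : Polynomial ℝ) : (aderdgAntider f).derivative = f := by
  unfold aderdgAntider
  rw [Polynomial.sum, derivative_sum]
  conv_rhs => rw [f.as_sum_support]
  refine Finset.sum_congr rfl fun n hn => ?_
  rw [derivative_C_mul, derivative_X_pow, ← C_mul_X_pow_eq_monomial, ← mul_assoc]
  push_cast
  rw [← C_mul]
  congr 1
  have hne : ((n:ℝ)+1) ≠ 0 := by positivity
  field_simp

lemma aderdgAntider_eval_zero (f : Polynomial ℝ) : (aderdgAntider f).eval 0 = 0 := by
  unfold aderdgAntider
  rw [Polynomial.sum, eval_finset_sum]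
  simp

lemma aderdgAntider_natDegree_le (f : Polynomial ℝ) (N : ℕ) (hN : 1 ≤ N)
    (hf : f.natDegree ≤ N - 1) : (aderdgAntider f).natDegree ≤ N := by
  unfold aderdgAntider
  rw [Polynomial.sum]
  refine (Polynomial.natDegree_sum_le_of_forall_le _ _ fun n hn => ?_)
  refine le_trans (natDegree_C_mul_le _ _) ?_
  refine le_trans (natDegree_X_pow_le _) ?_
  have := Polynomial.le_natDegree_of_mem_supp n hn
  omega

/-- For a polynomial right-hand side f of degree ≤ N−1 (N ≥ 1),
the vector of exact-solution values at the nodes is the unique solution of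
the local DG predictor system, and the local DG solution coincides with the
exact solution: the local DG predictor is exact. -/
theorem aderdg_local_predictor_exact_for_low_degree
    (N : ℕ) (hN : 1 ≤ N) (τ : Fin (N + 1) → ℝ) (hτ : Function.Injective τ)
    (hτ01 : ∀ p, τ p ∈ Set.Icc (0:ℝ) 1)
    (φ : Fin (N + 1) → ℝ → ℝ)
    (hφ : ∀ p x, φ p x = ∏ k ∈ Finset.univ.erase p, (x - τ k) / (τ p - τ k))
    (ψ ψt w : Fin (N + 1) → ℝ)
    (hψ : ∀ p, ψ p = φ p 0) (hψt : ∀ p, ψt p = φ p 1)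
    (hw : ∀ p, w p = ∫ x in (0:ℝ)..1, φ p x)
    (κ : Matrix (Fin (N + 1)) (Fin (N + 1)) ℝ)
    (hκ : ∀ p q, κ p q = ψt p * ψt q - ∫ x in (0:ℝ)..1, deriv (φ p) x * φ q x)
    (hGL : ∀ g : Polynomial ℝ, g.natDegree ≤ 2 * N + 1 →
      (∫ x in (0:ℝ)..1, g.eval x) = ∑ p, w p * g.eval (τ p))
    (hinv : IsUnit κ.det)
    (f : Polynomial ℝ) (hf : f.natDegree ≤ N - 1)
    (u₀ : ℝ) (u : ℝ → ℝ)
    (hu : ∀ t, u t = u₀ + ∫ s in (0:ℝ)..t, f.eval s) :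
    (∀ p, ∑ q, κ p q * u (τ q) = ψ p * u₀ + w p * f.eval (τ p)) ∧
      (∀ v : Fin (N + 1) → ℝ,
        (∀ p, ∑ q, κ p q * v q = ψ p * u₀ + w p * f.eval (τ p)) →
        v = fun p => u (τ p)) ∧
      (∀ x : ℝ, ∑ p, u (τ p) * φ p x = u x) := by
  have hinj : Set.InjOn τ ↑(Finset.univ : Finset (Fin (N+1))) := fun a _ b _ h => hτ h
  set P : Fin (N+1) → Polynomial ℝ := fun p => Lagrange.basis Finset.univ τ p with hP
  have hφP : ∀ p x, φ p x = (P p).eval x := by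
    intro p x
    rw [hφ, hP]
    simp only [Lagrange.basis, Lagrange.basisDivisor, Polynomial.eval_prod, eval_mul, eval_sub,
      eval_C, eval_X]
    exact Finset.prod_congr rfl fun k hk => (div_eq_inv_mul _ _)
  have hPeval : ∀ p q, (P p).eval (τ q) = if p = q then 1 else 0 := by
    intro p q
    by_cases h : p = q
    · subst h; simp [hP, Lagrange.eval_basis_self hinj (Finset.mem_univ p)]
    · simp [hP, h, Lagrange.eval_basis_of_ne h (Finset.mem_univ q)]
  have hPdeg : ∀ p, (P p).natDegree ≤ N := by
    intro p
    rw [hP, Lagrange.natDegree_basis hinj (Finset.mem_univ p)]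
    simp
  have hinterp : ∀ g : Polynomial ℝ, g.natDegree ≤ N →
      ∀ x, ∑ p, g.eval (τ p) * (P p).eval x = g.eval x := by
    intro g hg x
    have hdeg : g.degree < ((Finset.univ : Finset (Fin (N+1))).card : WithBot ℕ) := by
      rw [Finset.card_univ, Fintype.card_fin]
      calc g.degree ≤ (g.natDegree : WithBot ℕ) := Polynomial.degree_le_natDegree
        _ < ((N+1 : ℕ) : WithBot ℕ) := by exact_mod_cast Nat.lt_succ_of_le hg
    conv_rhs => rw [Lagrange.eq_interpolate hinj hdeg]
    rw [Lagrange.interpolate_apply, Polynomial.eval_finset_sum]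
    exact (Finset.sum_congr rfl fun i _ => by rw [eval_mul, eval_C]).symm
  -- exact solution polynomial
  set U : Polynomial ℝ := Polynomial.C u₀ + aderdgAntider f with hUdef
  have hUder : U.derivative = f := by
    rw [hUdef, derivative_add, derivative_C, aderdgAntider_deriv, zero_add]
  have hU0 : U.eval 0 = u₀ := by simp [hUdef, aderdgAntider_eval_zero]
  have hUdeg : U.natDegree ≤ N := by
    refine le_trans (natDegree_add_le _ _) (max_le ?_ (aderdgAntider_natDegree_le f N hN hf))
    simp
  have huU : ∀ t, u t = U.eval t := by
    intro t
    have h1 : (∫ s in (0:ℝ)..t, f.eval s) = U.eval t - U.eval 0 := by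
      rw [← hUder]; exact aderdg_poly_ftc U 0 t
    rw [hu, h1, hU0]; ring
  have hthird : ∀ x, ∑ p, u (τ p) * φ p x = u x := by
    intro x
    simp_rw [huU, hφP]
    exact hinterp U hUdeg x
  have hderφ : ∀ p, deriv (φ p) = fun x => (P p).derivative.eval x := by
    intro p
    have h : φ p = fun x => (P p).eval x := funext fun x => hφP p x
    rw [h]
    funext x
    exact Polynomial.deriv (𝕜 := ℝ) (p := P p) (x := x)
  have hB : ∀ p, (∫ x in (0:ℝ)..1, (P p).eval x * f.eval x) = w p * f.eval (τ p) := by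
    intro p
    have hdeg : ((P p) * f).natDegree ≤ 2*N+1 := by
      refine le_trans natDegree_mul_le ?_
      have h1 := hPdeg p
      omega
    have h2 := hGL ((P p)*f) hdeg
    simp only [Polynomial.eval_mul] at h2
    rw [h2]
    rw [Finset.sum_eq_single p]
    · rw [hPeval p p]; simp
    · intro q _ hq
      rw [hPeval p q, if_neg (Ne.symm hq)]; ring
    · intro h; exact absurd (Finset.mem_univ p) h
  have hfirst : ∀ p, ∑ q, κ p q * u (τ q) = ψ p * u₀ + w p * f.eval (τ p) := by
    intro p
    have hA : (∫ x in (0:ℝ)..1, (P p).derivative.eval x * U.eval x)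
        = ψt p * U.eval 1 - ψ p * u₀ - w p * f.eval (τ p) := by
      have h1 : ((P p) * U).derivative = (P p).derivative * U + (P p) * f := by
        rw [derivative_mul, hUder]
      have h2 := aderdg_poly_ftc ((P p) * U) 0 1
      rw [h1] at h2
      have h3 : (∫ x in (0:ℝ)..1, ((P p).derivative * U + (P p) * f).eval x)
          = (∫ x in (0:ℝ)..1, (P p).derivative.eval x * U.eval x)
            + ∫ x in (0:ℝ)..1, (P p).eval x * f.eval x := by
        simp_rw [Polynomial.eval_add, Polynomial.eval_mul]
        exact intervalIntegral.integral_add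
          (((P p).derivative.continuous.mul U.continuous).intervalIntegrable _ _)
          (((P p).continuous.mul f.continuous).intervalIntegrable _ _)
      rw [h3, hB p] at h2
      have he1 : ((P p)*U).eval 1 = ψt p * U.eval 1 := by
        rw [eval_mul, hψt, hφP]
      have he0 : ((P p)*U).eval 0 = ψ p * u₀ := by
        rw [eval_mul, hψ, hφP, hU0]
      rw [he1, he0] at h2
      linarith
    have hsum1 : ∑ q, ψt q * u (τ q) = U.eval 1 := by
      have := hthird 1
      rw [huU 1] at this
      rw [← this]
      exact Finset.sum_congr rfl fun q _ => by rw [hψt]; ring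
    calc ∑ q, κ p q * u (τ q)
        = ∑ q, (ψt p * (ψt q * u (τ q))
            - (∫ x in (0:ℝ)..1, (P p).derivative.eval x * (P q).eval x) * u (τ q)) := by
          refine Finset.sum_congr rfl fun q _ => ?_
          rw [hκ, hderφ p]
          simp_rw [hφP q]
          ring
      _ = ψt p * (∑ q, ψt q * u (τ q))
            - ∑ q, (∫ x in (0:ℝ)..1, (P p).derivative.eval x * (P q).eval x) * u (τ q) := by
          rw [Finset.sum_sub_distrib, Finset.mul_sum]
      _ = ψt p * U.eval 1 - (∫ x in (0:ℝ)..1, (P p).derivative.eval x * U.eval x) := by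
          rw [hsum1]
          congr 1
          have hmc : ∀ q : Fin (N+1),
              (∫ x in (0:ℝ)..1, (P p).derivative.eval x * (P q).eval x) * u (τ q)
              = ∫ x in (0:ℝ)..1, (P p).derivative.eval x * (P q).eval x * u (τ q) :=
            fun q => (intervalIntegral.integral_mul_const _ _).symm
          simp_rw [hmc]
          rw [← intervalIntegral.integral_finset_sum
            (f := fun q x => (P p).derivative.eval x * (P q).eval x * u (τ q)) (fun q _ =>
            ((((P p).derivative.continuous.mul (P q).continuous).mul
              continuous_const).intervalIntegrable _ _))]
          congr 1
          funext x
          have : ∑ q, (P p).derivative.eval x * (P q).eval x * u (τ q)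
              = (P p).derivative.eval x * ∑ q, U.eval (τ q) * (P q).eval x := by
            rw [Finset.mul_sum]
            exact Finset.sum_congr rfl fun q _ => by rw [huU (τ q)]; ring
          rw [this, hinterp U hUdeg x]
      _ = ψt p * U.eval 1 - (ψt p * U.eval 1 - ψ p * u₀ - w p * f.eval (τ p)) := by rw [hA]
      _ = ψ p * u₀ + w p * f.eval (τ p) := by ring
  refine ⟨hfirst, ?_, hthird⟩
  intro v hv
  have hsys : κ.mulVec v = κ.mulVec (fun p => u (τ p)) := by
    funext p
    simp only [Matrix.mulVec, dotProduct]
    rw [hv p, ← hfirst p]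
  calc v = (1 : Matrix (Fin (N+1)) (Fin (N+1)) ℝ).mulVec v := (Matrix.one_mulVec v).symm
    _ = (κ⁻¹ * κ).mulVec v := by rw [Matrix.nonsing_inv_mul κ hinv]
    _ = κ⁻¹.mulVec (κ.mulVec v) := (Matrix.mulVec_mulVec v κ⁻¹ κ).symm
    _ = κ⁻¹.mulVec (κ.mulVec (fun p => u (τ p))) := by rw [hsys]
    _ = (κ⁻¹ * κ).mulVec (fun p => u (τ p)) := Matrix.mulVec_mulVec _ κ⁻¹ κ
    _ = fun p => u (τ p) := by rw [Matrix.nonsing_inv_mul κ hinv, Matrix.one_mulVec]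
end

section
/- (Simplifying condition C(N) for the IRK-GL-ADER-DG method.) Under the Gauss–Legendre quadrature property, for all 0 ≤ p ≤ N and all integers r with 0 ≤ r ≤ N − 1 one has Σ_{q=0}^{N} κ_{pq} τ_q^{r+1} = (r+1) w_p τ_p^{r}. Equivalently, if κ is invertible and a = κ⁻¹ · diag(w), then Σ_{q=0}^{N} a_{pq} τ_q^{r} = τ_p^{r+1}/(r+1) for all 0 ≤ p ≤ N and 0 ≤ r ≤ N − 1; in particular Σ_{q=0}^{N} a_{pq} = τ_p. -/
open scoped BigOperators

/-- Simplifying condition C(N) for the IRK-GL-ADER-DG method: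
Σ_q κ_{pq} τ_q^{r+1} = (r+1) w_p τ_p^r for 0 ≤ r ≤ N−1; equivalently, if κ is
invertible and a = κ⁻¹ diag(w), then Σ_q a_{pq} τ_q^r = τ_p^{r+1}/(r+1); in
particular Σ_q a_{pq} = τ_p. -/
theorem aderdg_simplifying_condition_C
    (N : ℕ) (τ : Fin (N + 1) → ℝ) (hτ : Function.Injective τ)
    (hτ01 : ∀ p, τ p ∈ Set.Icc (0:ℝ) 1)
    (φ : Fin (N + 1) → ℝ → ℝ)
    (hφ : ∀ p x, φ p x = ∏ k ∈ Finset.univ.erase p, (x - τ k) / (τ p - τ k))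
    (ψ ψt w : Fin (N + 1) → ℝ)
    (hψ : ∀ p, ψ p = φ p 0) (hψt : ∀ p, ψt p = φ p 1)
    (hw : ∀ p, w p = ∫ x in (0:ℝ)..1, φ p x)
    (κ : Matrix (Fin (N + 1)) (Fin (N + 1)) ℝ)
    (hκ : ∀ p q, κ p q = ψt p * ψt q - ∫ x in (0:ℝ)..1, deriv (φ p) x * φ q x)
    (hGL : ∀ g : Polynomial ℝ, g.natDegree ≤ 2 * N + 1 →
      (∫ x in (0:ℝ)..1, g.eval x) = ∑ p, w p * g.eval (τ p)) :
    (∀ p, ∀ r : ℕ, r < N →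
        ∑ q, κ p q * τ q ^ (r + 1) = (r + 1 : ℝ) * w p * τ p ^ r) ∧
      (IsUnit κ.det →
        (∀ p, ∀ r : ℕ, r < N →
            ∑ q, (κ⁻¹ * Matrix.diagonal w) p q * τ q ^ r =
              τ p ^ (r + 1) / (r + 1 : ℝ)) ∧
          (0 < N → ∀ p, ∑ q, (κ⁻¹ * Matrix.diagonal w) p q = τ p)) := by
  classical
  have hinj : Set.InjOn τ ↑(Finset.univ : Finset (Fin (N + 1))) := hτ.injOn
  set Φ : Fin (N + 1) → Polynomial ℝ := fun p => Lagrange.basis Finset.univ τ p with hΦ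
  -- φ is the evaluation of Φ
  have hΦeval : ∀ p x, φ p x = (Φ p).eval x := by
    intro p x
    rw [hφ, hΦ]
    simp only [Lagrange.basis, Polynomial.eval_prod, Lagrange.basisDivisor,
      Polynomial.eval_mul, Polynomial.eval_C, Polynomial.eval_sub, Polynomial.eval_X]
    exact Finset.prod_congr rfl fun k _ => by rw [div_eq_mul_inv, mul_comm]
  have hφfun : ∀ p, φ p = fun x => (Φ p).eval x := fun p => funext (hΦeval p)
  have hderiv : ∀ p x, deriv (φ p) x = (Φ p).derivative.eval x := by
    intro p x; rw [hφfun p, Polynomial.deriv]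
  have hΦdeg : ∀ p, (Φ p).natDegree = N := by
    intro p
    rw [hΦ]
    simpa using Lagrange.natDegree_basis hinj (Finset.mem_univ p)
  have hnode : ∀ p q, (Φ p).eval (τ q) = if p = q then 1 else 0 := by
    intro p q
    by_cases h : p = q
    · subst h; simp [hΦ, Lagrange.eval_basis_self hinj (Finset.mem_univ p)]
    · simp [h, hΦ, Lagrange.eval_basis_of_ne h (Finset.mem_univ q)]
  -- interpolation identity
  have hinterp : ∀ m : ℕ, m ≤ N →
      (Polynomial.X ^ m : Polynomial ℝ) = ∑ q, Polynomial.C (τ q ^ m) * Φ q := by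
    intro m hm
    have hdeg : (Polynomial.X ^ m : Polynomial ℝ).degree < (Finset.univ : Finset (Fin (N+1))).card := by
      simp only [Polynomial.degree_X_pow, Finset.card_univ, Fintype.card_fin]
      exact_mod_cast Nat.lt_succ_of_le hm
    have := Lagrange.eq_interpolate (f := (Polynomial.X ^ m : Polynomial ℝ)) hinj hdeg
    rw [Lagrange.interpolate_apply] at this
    simp only [Polynomial.eval_pow, Polynomial.eval_X] at this
    simp only [hΦ]
    exact this
  -- Part 1
  have part1 : ∀ p, ∀ r : ℕ, r < N →
      ∑ q, κ p q * τ q ^ (r + 1) = (r + 1 : ℝ) * w p * τ p ^ r := by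
    intro p r hr
    have hi : (Polynomial.X ^ (r + 1) : Polynomial ℝ) = ∑ q, Polynomial.C (τ q ^ (r+1)) * Φ q :=
      hinterp (r + 1) hr
    -- Step A : ∑ q, ψt q * τ q ^ (r+1) = 1
    have stepA : ∑ q, ψt q * τ q ^ (r + 1) = 1 := by
      have := congrArg (Polynomial.eval (1:ℝ)) hi
      simp only [Polynomial.eval_pow, Polynomial.eval_X, one_pow, Polynomial.eval_finset_sum,
        Polynomial.eval_mul, Polynomial.eval_C] at this
      calc ∑ q, ψt q * τ q ^ (r + 1)
          = ∑ q, τ q ^ (r+1) * Polynomial.eval 1 (Φ q) :=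
            Finset.sum_congr rfl fun q _ => by rw [hψt, hΦeval]; ring
        _ = 1 := this.symm
    -- pointwise identity : ∑ q, τ q ^(r+1) * (Φ p)' (x) * Φ q (x) = (Φ p)'(x) * x^(r+1)
    have hpt : ∀ x : ℝ, ∑ q, τ q ^ (r+1) * ((Φ p).derivative.eval x * (Φ q).eval x)
        = (Φ p).derivative.eval x * x ^ (r + 1) := by
      intro x
      have := congrArg (Polynomial.eval x) hi
      simp only [Polynomial.eval_pow, Polynomial.eval_X, Polynomial.eval_finset_sum,
        Polynomial.eval_mul, Polynomial.eval_C] at this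
      calc ∑ q, τ q ^ (r+1) * ((Φ p).derivative.eval x * (Φ q).eval x)
          = (Φ p).derivative.eval x * ∑ q, τ q ^ (r+1) * (Φ q).eval x := by
            rw [Finset.mul_sum]; exact Finset.sum_congr rfl fun q _ => by ring
        _ = (Φ p).derivative.eval x * x ^ (r + 1) := by rw [← this]
    -- Step B : sum of integrals = single integral
    have stepB : ∑ q, τ q ^ (r+1) * ∫ x in (0:ℝ)..1, deriv (φ p) x * φ q x
        = ∫ x in (0:ℝ)..1, (Φ p).derivative.eval x * x ^ (r + 1) := by
      have : ∀ q : Fin (N+1), τ q ^ (r+1) * (∫ x in (0:ℝ)..1, deriv (φ p) x * φ q x)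
          = ∫ x in (0:ℝ)..1, τ q ^ (r+1) * ((Φ p).derivative.eval x * (Φ q).eval x) := by
        intro q
        rw [← intervalIntegral.integral_const_mul]
        congr 1; funext x; rw [hderiv, hΦeval]
      simp_rw [this]
      rw [← intervalIntegral.integral_finset_sum]
      · congr 1; funext x; exact hpt x
      · intro q _
        exact (continuous_const.mul (((Φ p).derivative.continuous).mul
          ((Φ q).continuous))).intervalIntegrable 0 1
    -- FTC
    set P : Polynomial ℝ := Φ p * Polynomial.X ^ (r + 1) with hP
    have hPd : P.derivative = (Φ p).derivative * Polynomial.X ^ (r + 1)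
        + Φ p * (Polynomial.C ((r:ℝ) + 1) * Polynomial.X ^ r) := by
      rw [hP, Polynomial.derivative_mul, Polynomial.derivative_X_pow]
      push_cast
      ring
    have hftc : (∫ x in (0:ℝ)..1, P.derivative.eval x) = P.eval 1 - P.eval 0 := by
      refine intervalIntegral.integral_eq_sub_of_hasDerivAt (fun x _ => P.hasDerivAt x) ?_
      exact (P.derivative.continuous).intervalIntegrable 0 1
    have hsplit : (∫ x in (0:ℝ)..1, P.derivative.eval x)
        = (∫ x in (0:ℝ)..1, (Φ p).derivative.eval x * x ^ (r+1))
          + ((r:ℝ) + 1) * ∫ x in (0:ℝ)..1, (Φ p).eval x * x ^ r := by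
      rw [← intervalIntegral.integral_const_mul, ← intervalIntegral.integral_add
        (f := fun x => (Φ p).derivative.eval x * x ^ (r+1))
        (g := fun x => ((r:ℝ) + 1) * ((Φ p).eval x * x ^ r))
        ((((Φ p).derivative.continuous).mul (continuous_pow (r+1))).intervalIntegrable 0 1)
        ((continuous_const.mul (((Φ p).continuous).mul (continuous_pow r))).intervalIntegrable 0 1)]
      congr 1; funext x
      rw [hPd]
      simp [Polynomial.eval_mul, Polynomial.eval_add]
      ring
    have hPeval : P.eval 1 - P.eval 0 = ψt p := by
      rw [hP]
      simp [Polynomial.eval_mul, hψt, hΦeval]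
    -- Step D : quadrature
    have stepD : (∫ x in (0:ℝ)..1, (Φ p).eval x * x ^ r) = w p * τ p ^ r := by
      have hdeg : (Φ p * Polynomial.X ^ r).natDegree ≤ 2 * N + 1 := by
        refine le_trans (Polynomial.natDegree_mul_le) ?_
        rw [hΦdeg, Polynomial.natDegree_X_pow]
        omega
      have := hGL (Φ p * Polynomial.X ^ r) hdeg
      simp only [Polynomial.eval_mul, Polynomial.eval_pow, Polynomial.eval_X] at this
      rw [this]
      rw [Finset.sum_eq_single p]
      · rw [hnode]; simp
      · intro q _ hq
        rw [hnode]
        simp [Ne.symm hq]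
      · simp
    have stepC : (∫ x in (0:ℝ)..1, (Φ p).derivative.eval x * x ^ (r+1))
        = ψt p - ((r:ℝ) + 1) * (w p * τ p ^ r) := by
      have := hftc
      rw [hsplit, hPeval, stepD] at this
      linarith
    calc ∑ q, κ p q * τ q ^ (r + 1)
        = ∑ q, (ψt p * (ψt q * τ q ^ (r+1))
            - τ q ^ (r+1) * ∫ x in (0:ℝ)..1, deriv (φ p) x * φ q x) := by
          refine Finset.sum_congr rfl fun q _ => ?_
          rw [hκ]; ring
      _ = ψt p * ∑ q, ψt q * τ q ^ (r+1)
            - ∑ q, τ q ^ (r+1) * ∫ x in (0:ℝ)..1, deriv (φ p) x * φ q x := by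
          rw [Finset.sum_sub_distrib, Finset.mul_sum]
      _ = ψt p * 1 - (ψt p - ((r:ℝ) + 1) * (w p * τ p ^ r)) := by
          rw [stepA, stepB, stepC]
      _ = (r + 1 : ℝ) * w p * τ p ^ r := by push_cast; ring
  refine ⟨part1, fun hdet => ?_⟩
  have key : ∀ p, ∀ r : ℕ, r < N →
      ∑ q, (κ⁻¹ * Matrix.diagonal w) p q * τ q ^ r = τ p ^ (r + 1) / (r + 1 : ℝ) := by
    intro p r hr
    set u : Fin (N+1) → ℝ := fun i => τ i ^ (r+1) / (r + 1 : ℝ) with hu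
    set v : Fin (N+1) → ℝ := fun i => τ i ^ r with hv
    have hr1 : ((r:ℝ) + 1) ≠ 0 := by positivity
    have hκu : κ.mulVec u = (Matrix.diagonal w).mulVec v := by
      funext i
      rw [Matrix.mulVec_diagonal]
      show ∑ j, κ i j * u j = w i * v i
      have : ∑ j, κ i j * u j = (∑ j, κ i j * τ j ^ (r+1)) / ((r:ℝ) + 1) := by
        rw [Finset.sum_div]
        exact Finset.sum_congr rfl fun j _ => by rw [hu]; ring
      rw [this, part1 i r hr, hv]
      push_cast
      field_simp
    have hAv : (κ⁻¹ * Matrix.diagonal w).mulVec v = u := by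
      rw [← Matrix.mulVec_mulVec, ← hκu, Matrix.mulVec_mulVec, Matrix.nonsing_inv_mul κ hdet,
        Matrix.one_mulVec]
    have := congrFun hAv p
    simpa [Matrix.mulVec, dotProduct, hu, hv] using this
  refine ⟨key, fun hN p => ?_⟩
  have := key p 0 hN
  simpa using this
end

section
/- (Simplifying condition D(N) for the IRK-GL-ADER-DG method.) Under the Gauss–Legendre quadrature property, for all 0 ≤ p ≤ N and all integers r with 0 ≤ r ≤ N − 1 one has Σ_{q=0}^{N} κ_{qp} (1 − τ_q^{r+1}) = (r+1) w_p τ_p^{r}. Equivalently, if κ is invertible and a = κ⁻¹ · diag(w), then Σ_{q=0}^{N} w_q a_{qp} τ_q^{r} = (w_p/(r+1)) (1 − τ_p^{r+1}) for all 0 ≤ p ≤ N and 0 ≤ r ≤ N − 1. -/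
open scoped BigOperators

/-- Simplifying condition D(N) for the IRK-GL-ADER-DG method:
Σ_q κ_{qp} (1 − τ_q^{r+1}) = (r+1) w_p τ_p^r for 0 ≤ r ≤ N−1; equivalently, if
κ is invertible and a = κ⁻¹ diag(w), then
Σ_q w_q a_{qp} τ_q^r = (w_p/(r+1)) (1 − τ_p^{r+1}). -/
theorem aderdg_simplifying_condition_D
    (N : ℕ) (τ : Fin (N + 1) → ℝ) (hτ : Function.Injective τ)
    (hτ01 : ∀ p, τ p ∈ Set.Icc (0:ℝ) 1)
    (φ : Fin (N + 1) → ℝ → ℝ)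
    (hφ : ∀ p x, φ p x = ∏ k ∈ Finset.univ.erase p, (x - τ k) / (τ p - τ k))
    (ψ ψt w : Fin (N + 1) → ℝ)
    (hψ : ∀ p, ψ p = φ p 0) (hψt : ∀ p, ψt p = φ p 1)
    (hw : ∀ p, w p = ∫ x in (0:ℝ)..1, φ p x)
    (κ : Matrix (Fin (N + 1)) (Fin (N + 1)) ℝ)
    (hκ : ∀ p q, κ p q = ψt p * ψt q - ∫ x in (0:ℝ)..1, deriv (φ p) x * φ q x)
    (hGL : ∀ g : Polynomial ℝ, g.natDegree ≤ 2 * N + 1 →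
      (∫ x in (0:ℝ)..1, g.eval x) = ∑ p, w p * g.eval (τ p)) :
    (∀ p, ∀ r : ℕ, r < N →
        ∑ q, κ q p * (1 - τ q ^ (r + 1)) = (r + 1 : ℝ) * w p * τ p ^ r) ∧
      (IsUnit κ.det →
        ∀ p, ∀ r : ℕ, r < N →
          ∑ q, w q * (κ⁻¹ * Matrix.diagonal w) q p * τ q ^ r =
            w p / (r + 1 : ℝ) * (1 - τ p ^ (r + 1))) := by
  have hInj : Set.InjOn τ (Finset.univ : Finset (Fin (N + 1))) := hτ.injOn
  set B : Fin (N + 1) → Polynomial ℝ := fun p => Lagrange.basis Finset.univ τ p with hB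
  have hφB : ∀ p x, φ p x = (B p).eval x := by
    intro p x
    rw [hφ, show B p = ∏ j ∈ Finset.univ.erase p, Lagrange.basisDivisor (τ p) (τ j) from rfl,
      Polynomial.eval_prod]
    refine Finset.prod_congr rfl fun k _ => ?_
    simp [Lagrange.basisDivisor, div_eq_mul_inv, mul_comm]
  have hBdeg : ∀ p, (B p).natDegree = N := by
    intro p
    rw [hB]
    rw [Lagrange.natDegree_basis hInj (Finset.mem_univ p)]
    simp
  have hBself : ∀ p, (B p).eval (τ p) = 1 := fun p =>
    Lagrange.eval_basis_self hInj (Finset.mem_univ p)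
  have hBne : ∀ p q, p ≠ q → (B p).eval (τ q) = 0 := fun p q h =>
    Lagrange.eval_basis_of_ne h (Finset.mem_univ q)
  -- part 1
  have part1 : ∀ p, ∀ r : ℕ, r < N →
      ∑ q, κ q p * (1 - τ q ^ (r + 1)) = (r + 1 : ℝ) * w p * τ p ^ r := by
    intro p r hr
    set g : Polynomial ℝ := 1 - Polynomial.X ^ (r + 1) with hg
    have hgnd : g.natDegree ≤ r + 1 := by
      rw [hg]; compute_degree
    have hgdeg : g.degree < (Finset.univ : Finset (Fin (N + 1))).card := by
      have h2 : ((Finset.univ : Finset (Fin (N + 1))).card : ℕ) = N + 1 := by simp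
      refine lt_of_le_of_lt g.degree_le_natDegree ?_
      rw [h2]
      exact_mod_cast Nat.lt_of_le_of_lt hgnd (by omega)
    have hf : ∑ q, Polynomial.C (1 - τ q ^ (r + 1)) * B q = g := by
      have h := Lagrange.eq_interpolate (f := g) hInj hgdeg
      rw [Lagrange.interpolate_apply] at h
      rw [h]
      refine Finset.sum_congr rfl fun q _ => ?_
      simp [hg, hB]
    -- rewrite κ with polynomials
    have hκ' : ∀ q, κ q p = ψt q * ψt p -
        ∫ x in (0:ℝ)..1, Polynomial.eval x ((B q).derivative * B p) := by
      intro q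
      rw [hκ]
      congr 1
      refine intervalIntegral.integral_congr fun x _ => ?_
      have hfq : φ q = fun y => (B q).eval y := funext (hφB q)
      rw [hfq, hφB p, Polynomial.eval_mul, Polynomial.deriv]
    have hint : ∀ P : Polynomial ℝ,
        IntervalIntegrable (fun x => P.eval x) MeasureTheory.volume (0:ℝ) 1 :=
      fun P => (Polynomial.continuous P).intervalIntegrable 0 1
    -- first piece: ∑ c_q ψt q = eval 1 g = 0
    have hψt0 : ∑ q, (1 - τ q ^ (r + 1)) * ψt q = 0 := by
      have h := congrArg (Polynomial.eval 1) hf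
      simp only [Polynomial.eval_finset_sum, Polynomial.eval_mul, Polynomial.eval_C] at h
      rw [show ∑ q, (1 - τ q ^ (r + 1)) * ψt q
          = ∑ q, (1 - τ q ^ (r + 1)) * (B q).eval 1 from
        Finset.sum_congr rfl fun q _ => by rw [hψt, hφB]]
      rw [h]
      simp [hg]
    -- second piece: the integral sum
    have hderiv : ∑ q, Polynomial.C (1 - τ q ^ (r + 1)) * (B q).derivative
        = -(Polynomial.C ((r:ℝ) + 1) * Polynomial.X ^ r) := by
      have h := congrArg Polynomial.derivative hf
      rw [Polynomial.derivative_sum] at h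
      simp only [Polynomial.derivative_mul, Polynomial.derivative_C, zero_mul, zero_add] at h
      rw [h, hg, Polynomial.derivative_sub, Polynomial.derivative_one,
        Polynomial.derivative_X_pow]
      simp only [Nat.add_sub_cancel, Nat.cast_add, Nat.cast_one, zero_sub]
    have hsumint : ∑ q, (1 - τ q ^ (r + 1)) *
          ∫ x in (0:ℝ)..1, Polynomial.eval x ((B q).derivative * B p)
        = ∫ x in (0:ℝ)..1,
            Polynomial.eval x ((∑ q, Polynomial.C (1 - τ q ^ (r + 1)) * (B q).derivative) * B p) := by
      rw [show (fun x => Polynomial.eval x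
            ((∑ q, Polynomial.C (1 - τ q ^ (r + 1)) * (B q).derivative) * B p))
          = fun x => ∑ q, (1 - τ q ^ (r + 1)) *
              Polynomial.eval x ((B q).derivative * B p) from ?_]
      · rw [intervalIntegral.integral_finset_sum]
        · exact Finset.sum_congr rfl fun q _ =>
            (intervalIntegral.integral_const_mul _ _).symm
        · intro q _
          exact (continuous_const.mul
            (Polynomial.continuous ((B q).derivative * B p))).intervalIntegrable 0 1
      · funext x
        simp [Polynomial.eval_finset_sum, Finset.sum_mul, Polynomial.eval_mul, mul_assoc]
    -- Gauss-Legendre evaluation of ∫ x^r * B p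
    have hglp : (∫ x in (0:ℝ)..1, Polynomial.eval x (Polynomial.X ^ r * B p))
        = w p * τ p ^ r := by
      have hdeg : (Polynomial.X ^ r * B p).natDegree ≤ 2 * N + 1 := by
        refine le_trans (Polynomial.natDegree_mul_le) ?_
        rw [Polynomial.natDegree_X_pow, hBdeg]
        omega
      rw [hGL _ hdeg]
      rw [Finset.sum_eq_single p]
      · simp [Polynomial.eval_mul, hBself p]
      · intro s _ hs
        simp [Polynomial.eval_mul, hBne p s (Ne.symm hs)]
      · intro h; exact absurd (Finset.mem_univ p) h
    -- assemble
    calc ∑ q, κ q p * (1 - τ q ^ (r + 1))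
        = ∑ q, ((1 - τ q ^ (r + 1)) * ψt q * ψt p
            - (1 - τ q ^ (r + 1)) * ∫ x in (0:ℝ)..1,
                Polynomial.eval x ((B q).derivative * B p)) := by
          refine Finset.sum_congr rfl fun q _ => ?_
          rw [hκ' q]; ring
      _ = (∑ q, (1 - τ q ^ (r + 1)) * ψt q) * ψt p
            - ∑ q, (1 - τ q ^ (r + 1)) * ∫ x in (0:ℝ)..1,
                Polynomial.eval x ((B q).derivative * B p) := by
          rw [Finset.sum_sub_distrib, Finset.sum_mul]
      _ = - ∫ x in (0:ℝ)..1,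
            Polynomial.eval x ((-(Polynomial.C ((r:ℝ) + 1) * Polynomial.X ^ r)) * B p) := by
          rw [hψt0, hsumint, hderiv]; ring
      _ = ((r:ℝ) + 1) * ∫ x in (0:ℝ)..1, Polynomial.eval x (Polynomial.X ^ r * B p) := by
          rw [← intervalIntegral.integral_const_mul, ← intervalIntegral.integral_neg]
          refine intervalIntegral.integral_congr fun x _ => ?_
          simp only [Polynomial.eval_mul, Polynomial.eval_neg, Polynomial.eval_pow,
            Polynomial.eval_X, Polynomial.eval_C]
          ring
      _ = (r + 1 : ℝ) * w p * τ p ^ r := by rw [hglp]; ring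
  refine ⟨part1, ?_⟩
  -- part 2
  intro hdet p r hr
  have hinv : κ * κ⁻¹ = 1 := Matrix.mul_nonsing_inv κ hdet
  have hr1 : ((r:ℝ) + 1) ≠ 0 := by positivity
  have key : ((r:ℝ) + 1) * ∑ q, (w q * τ q ^ r) * κ⁻¹ q p = 1 - τ p ^ (r + 1) := by
    rw [Finset.mul_sum]
    rw [Finset.sum_congr rfl (fun q _ => show ((r:ℝ)+1) * ((w q * τ q ^ r) * κ⁻¹ q p)
        = (∑ s, κ s q * (1 - τ s ^ (r + 1))) * κ⁻¹ q p by
      rw [part1 q r hr]; ring)]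
    simp_rw [Finset.sum_mul]
    rw [Finset.sum_comm]
    rw [Finset.sum_congr rfl (fun s _ => show
        ∑ q, κ s q * (1 - τ s ^ (r + 1)) * κ⁻¹ q p
          = (1 - τ s ^ (r + 1)) * (κ * κ⁻¹) s p by
      rw [Matrix.mul_apply, Finset.mul_sum]
      exact Finset.sum_congr rfl fun q _ => by ring)]
    rw [hinv]
    simp [Matrix.one_apply]
  have hsum : ∑ q, (w q * τ q ^ r) * κ⁻¹ q p = (1 - τ p ^ (r + 1)) / ((r:ℝ) + 1) := by
    rw [eq_div_iff hr1]
    linear_combination key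
  calc ∑ q, w q * (κ⁻¹ * Matrix.diagonal w) q p * τ q ^ r
      = w p * ∑ q, (w q * τ q ^ r) * κ⁻¹ q p := by
        rw [Finset.mul_sum]
        refine Finset.sum_congr rfl fun q _ => ?_
        rw [Matrix.mul_diagonal]
        ring
    _ = w p / (r + 1 : ℝ) * (1 - τ p ^ (r + 1)) := by
        rw [hsum]; ring
end

section
/- Assume every weight w_p is nonzero, let μ = diag(w_0,…,w_N) and α = μ⁻¹ κ. Then the nonlinear-stability matrix Q := μα + αᵀμ − αᵀ w wᵀ α is the dyadic square of the left boundary vector: Q_{pq} = ψ_p ψ_q for all p, q, i.e. Q = ψ ψᵀ. Consequently Q is symmetric positive semidefinite of rank exactly 1 (since Σ_p ψ_p = 1 forces ψ ≠ 0), and its unique nonzero eigenvalue is Σ_{p=0}^{N} ψ_p². -/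
open scoped BigOperators
open Matrix

/-- The nonlinear-stability matrix Q = μα + αᵀμ − αᵀ w wᵀ α
(with μ = diag(w), α = μ⁻¹ κ) is the dyadic square ψ ψᵀ of the left boundary
vector; hence Q is symmetric positive semidefinite of rank exactly 1, and its
unique nonzero eigenvalue is Σ_p ψ_p². -/
theorem aderdg_Q_matrix_dyadic
    (N : ℕ) (τ : Fin (N + 1) → ℝ) (hτ : Function.Injective τ)
    (φ : Fin (N + 1) → ℝ → ℝ)
    (hφ : ∀ p x, φ p x = ∏ k ∈ Finset.univ.erase p, (x - τ k) / (τ p - τ k))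
    (ψ ψt w : Fin (N + 1) → ℝ)
    (hψ : ∀ p, ψ p = φ p 0) (hψt : ∀ p, ψt p = φ p 1)
    (hw : ∀ p, w p = ∫ x in (0:ℝ)..1, φ p x)
    (κ : Matrix (Fin (N + 1)) (Fin (N + 1)) ℝ)
    (hκ : ∀ p q, κ p q = ψt p * ψt q - ∫ x in (0:ℝ)..1, deriv (φ p) x * φ q x)
    (hwne : ∀ p, w p ≠ 0)
    (μ α Q : Matrix (Fin (N + 1)) (Fin (N + 1)) ℝ)
    (hμ : μ = Matrix.diagonal w)
    (hα : α = μ⁻¹ * κ)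
    (hQ : Q = μ * α + αᵀ * μ - αᵀ * Matrix.vecMulVec w w * α) :
    Q = Matrix.vecMulVec ψ ψ ∧
      Q.IsSymm ∧
      Q.PosSemidef ∧
      Q.rank = 1 ∧
      (∀ lam : ℝ, (∃ v : Fin (N + 1) → ℝ, v ≠ 0 ∧ Q.mulVec v = lam • v) →
        lam = 0 ∨ lam = ∑ p, ψ p ^ 2) ∧
      (∃ v : Fin (N + 1) → ℝ, v ≠ 0 ∧ Q.mulVec v = (∑ p, ψ p ^ 2) • v) := by
  classical
  set P : Fin (N + 1) → Polynomial ℝ := fun p => Lagrange.basis Finset.univ τ p with hP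
  have hφP : ∀ p x, φ p x = (P p).eval x := by
    intro p x
    rw [hφ, hP]
    simp only [Lagrange.basis, Polynomial.eval_prod]
    refine Finset.prod_congr rfl fun k _ => ?_
    simp [Lagrange.basisDivisor, div_eq_inv_mul]
  have hφfun : ∀ p, φ p = fun x => (P p).eval x := fun p => funext (hφP p)
  have hsumP : ∑ p, P p = 1 := Lagrange.sum_basis hτ.injOn Finset.univ_nonempty
  have hderiv : ∀ p x, deriv (φ p) x = ((P p).derivative).eval x := by
    intro p x; rw [hφfun p]; exact ((P p).hasDerivAt x).deriv
  have hψval : ∀ p, ψ p = (P p).eval 0 := fun p => by rw [hψ, hφP]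
  have hψtval : ∀ p, ψt p = (P p).eval 1 := fun p => by rw [hψt, hφP]
  have hsumψt : ∑ p, ψt p = 1 := by
    simp_rw [hψtval]
    rw [← Polynomial.eval_finset_sum, hsumP, Polynomial.eval_one]
  have hsumψ : ∑ p, ψ p = 1 := by
    simp_rw [hψval]
    rw [← Polynomial.eval_finset_sum, hsumP, Polynomial.eval_one]
  have hint : ∀ f : Polynomial ℝ,
      IntervalIntegrable (fun x => f.eval x) MeasureTheory.volume 0 1 :=
    fun f => f.continuous.intervalIntegrable _ _
  have hIeq : ∀ p q : Fin (N + 1),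
      (∫ x in (0:ℝ)..1, deriv (φ p) x * φ q x)
        = ∫ x in (0:ℝ)..1, ((P p).derivative * P q).eval x := by
    intro p q
    refine intervalIntegral.integral_congr fun x _ => ?_
    rw [hderiv, hφP, Polynomial.eval_mul]
  have hFTCpoly : ∀ f : Polynomial ℝ,
      (∫ x in (0:ℝ)..1, f.derivative.eval x) = f.eval 1 - f.eval 0 := by
    intro f
    exact intervalIntegral.integral_eq_sub_of_hasDerivAt (fun x _ => f.hasDerivAt x) (hint _)
  have hFTC : ∀ p q : Fin (N + 1),
      (∫ x in (0:ℝ)..1, deriv (φ p) x * φ q x)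
        + (∫ x in (0:ℝ)..1, deriv (φ q) x * φ p x)
        = ψt p * ψt q - ψ p * ψ q := by
    intro p q
    rw [hIeq, hIeq]
    have h2 : (∫ x in (0:ℝ)..1, ((P p).derivative * P q).eval x)
        + (∫ x in (0:ℝ)..1, ((P q).derivative * P p).eval x)
        = ∫ x in (0:ℝ)..1, ((P p * P q).derivative).eval x := by
      rw [← intervalIntegral.integral_add (hint _) (hint _)]
      refine intervalIntegral.integral_congr fun x _ => ?_
      rw [Polynomial.derivative_mul]
      simp only [Polynomial.eval_add, Polynomial.eval_mul]
      ring
    rw [h2, hFTCpoly, Polynomial.eval_mul, Polynomial.eval_mul,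
      hψval, hψval, hψtval, hψtval]
  have hsumκ : ∀ q, ∑ i, κ i q = ψt q := by
    intro q
    simp_rw [hκ]
    rw [Finset.sum_sub_distrib, ← Finset.sum_mul, hsumψt, one_mul]
    have hz : ∑ i, ∫ x in (0:ℝ)..1, deriv (φ i) x * φ q x = 0 := by
      simp_rw [hIeq]
      rw [← intervalIntegral.integral_finset_sum (fun i _ => hint _)]
      have hzero : ∀ x : ℝ, (∑ i, ((P i).derivative * P q).eval x) = 0 := by
        intro x
        rw [← Polynomial.eval_finset_sum]
        have : ∑ i, (P i).derivative * P q = 0 := by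
          rw [← Finset.sum_mul, ← map_sum Polynomial.derivative P Finset.univ,
            hsumP, Polynomial.derivative_one, zero_mul]
        rw [this, Polynomial.eval_zero]
      simp only [hzero, intervalIntegral.integral_zero]
    rw [hz, sub_zero]
  -- matrix algebra
  have hdet : IsUnit μ.det := by
    rw [hμ, Matrix.det_diagonal]
    exact isUnit_iff_ne_zero.mpr (Finset.prod_ne_zero_iff.mpr fun p _ => hwne p)
  have hμα : μ * α = κ := by
    rw [hα, ← Matrix.mul_assoc, Matrix.mul_nonsing_inv _ hdet, Matrix.one_mul]
  have hκα : ∀ i q, w i * α i q = κ i q := by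
    intro i q
    have h := congrFun (congrFun hμα i) q
    rwa [hμ, Matrix.diagonal_mul] at h
  have hQent : ∀ p q, Q p q = ψ p * ψ q := by
    intro p q
    have e1 : (μ * α) p q = κ p q := congrFun (congrFun hμα p) q
    have e2 : (αᵀ * μ) p q = κ q p := by
      rw [hμ, Matrix.mul_diagonal, Matrix.transpose_apply, mul_comm, hκα]
    have e3 : (αᵀ * Matrix.vecMulVec w w * α) p q = ψt p * ψt q := by
      have inner : ∀ j, (αᵀ * Matrix.vecMulVec w w) p j = ψt p * w j := by
        intro j
        rw [Matrix.mul_apply]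
        have h1 : ∀ i, αᵀ p i * Matrix.vecMulVec w w i j = κ i p * w j := by
          intro i
          rw [Matrix.transpose_apply, Matrix.vecMulVec_apply, ← hκα]
          ring
        rw [Finset.sum_congr rfl fun i _ => h1 i, ← Finset.sum_mul, hsumκ]
      rw [Matrix.mul_apply]
      have h2 : ∀ j, (αᵀ * Matrix.vecMulVec w w) p j * α j q = ψt p * κ j q := by
        intro j
        rw [inner, ← hκα]
        ring
      rw [Finset.sum_congr rfl fun j _ => h2 j, ← Finset.mul_sum, hsumκ]
    have hcomm : ψt q * ψt p = ψt p * ψt q := mul_comm _ _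
    have hf := hFTC p q
    rw [hQ, Matrix.sub_apply, Matrix.add_apply, e1, e2, e3, hκ p q, hκ q p]
    linarith
  have hQvec : Q = Matrix.vecMulVec ψ ψ := by
    ext p q; rw [hQent, Matrix.vecMulVec_apply]
  have hmulv : ∀ x : Fin (N + 1) → ℝ, Q.mulVec x = (ψ ⬝ᵥ x) • ψ := by
    intro x; funext p
    simp only [Matrix.mulVec, dotProduct, Pi.smul_apply, smul_eq_mul]
    simp_rw [hQent, mul_assoc, ← Finset.mul_sum]
    rw [mul_comm]
  have hdotψ : ψ ⬝ᵥ ψ = ∑ p, ψ p ^ 2 := by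
    simp [dotProduct, sq]
  have hψne : ψ ≠ 0 := by
    intro h
    rw [h] at hsumψ
    simp at hsumψ
  have hsymm : Q.IsSymm := by
    rw [Matrix.IsSymm]
    ext i j
    rw [Matrix.transpose_apply, hQent, hQent, mul_comm]
  refine ⟨hQvec, hsymm, ⟨?_, ?_⟩, ?_, ?_, ?_⟩
  · rw [Matrix.IsHermitian]
    ext i j
    simp only [Matrix.conjTranspose_apply, star_trivial]
    rw [hQent, hQent, mul_comm]
  · intro x
    have hherm : Q.IsHermitian := by
      rw [Matrix.IsHermitian]
      ext i j
      simp only [Matrix.conjTranspose_apply, star_trivial]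
      rw [hQent, hQent, mul_comm]
    have key : ∀ x : Fin (N + 1) → ℝ, 0 ≤ star x ⬝ᵥ (Q *ᵥ x) := by
      intro x
      rw [star_trivial, hmulv, dotProduct_smul, smul_eq_mul,
        dotProduct_comm]
      exact mul_self_nonneg _
    exact ((Matrix.posSemidef_iff_dotProduct_mulVec (M := Q)).mpr ⟨hherm, key⟩).2 x
  · have hrange : LinearMap.range Q.mulVecLin = Submodule.span ℝ {ψ} := by
      apply le_antisymm
      · rintro y ⟨x, rfl⟩
        rw [Matrix.mulVecLin_apply, hmulv]
        exact Submodule.smul_mem _ _ (Submodule.mem_span_singleton_self ψ)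
      · rw [Submodule.span_singleton_le_iff_mem]
        refine ⟨fun _ => 1, ?_⟩
        rw [Matrix.mulVecLin_apply, hmulv]
        have : ψ ⬝ᵥ (fun _ => (1:ℝ)) = 1 := by
          simp [dotProduct, hsumψ]
        rw [this, one_smul]
    rw [Matrix.rank, hrange]
    exact finrank_span_singleton hψne
  · rintro lam ⟨v, hv, hQv⟩
    rw [hmulv] at hQv
    by_cases hψv : ψ ⬝ᵥ v = 0
    · left
      rw [hψv, zero_smul] at hQv
      rcases smul_eq_zero.mp hQv.symm with h | h
      · exact h
      · exact absurd h hv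
    · right
      have h : (ψ ⬝ᵥ v) * (ψ ⬝ᵥ ψ) = (ψ ⬝ᵥ v) * lam := by
        calc (ψ ⬝ᵥ v) * (ψ ⬝ᵥ ψ) = ψ ⬝ᵥ ((ψ ⬝ᵥ v) • ψ) := by
              rw [dotProduct_smul, smul_eq_mul]
          _ = ψ ⬝ᵥ (lam • v) := by rw [hQv]
          _ = (ψ ⬝ᵥ v) * lam := by rw [dotProduct_smul, smul_eq_mul, mul_comm]
      have h2 := mul_left_cancel₀ hψv h
      rw [← hdotψ]
      exact h2.symm
  · refine ⟨ψ, hψne, ?_⟩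
    rw [hmulv, hdotψ]
end

section
/- (Algebraic stability of the IRK-GL-ADER-DG method.) Assume κ is invertible and every weight w_p is nonzero, let μ = diag(w_0,…,w_N) and a = κ⁻¹ μ. Then the algebraic-stability matrix M := μ a + aᵀ μ − w wᵀ equals the dyadic square (aᵀψ)(aᵀψ)ᵀ, i.e. M_{pq} = (Σ_i a_{ip} ψ_i)(Σ_j a_{jq} ψ_j) for all p, q. In particular M is symmetric positive semidefinite. -/
open scoped BigOperators
open Matrix

/-- Algebraic stability of the IRK-GL-ADER-DG method: the matrix
M = μa + aᵀμ − w wᵀ equals the dyadic square (aᵀψ)(aᵀψ)ᵀ, and in particular M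
is symmetric positive semidefinite. -/
theorem aderdg_algebraic_stability
    (N : ℕ) (τ : Fin (N + 1) → ℝ) (hτ : Function.Injective τ)
    (φ : Fin (N + 1) → ℝ → ℝ)
    (hφ : ∀ p x, φ p x = ∏ k ∈ Finset.univ.erase p, (x - τ k) / (τ p - τ k))
    (ψ ψt w : Fin (N + 1) → ℝ)
    (hψ : ∀ p, ψ p = φ p 0) (hψt : ∀ p, ψt p = φ p 1)
    (hw : ∀ p, w p = ∫ x in (0:ℝ)..1, φ p x)
    (κ : Matrix (Fin (N + 1)) (Fin (N + 1)) ℝ)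
    (hκ : ∀ p q, κ p q = ψt p * ψt q - ∫ x in (0:ℝ)..1, deriv (φ p) x * φ q x)
    (hinv : IsUnit κ.det) (hwne : ∀ p, w p ≠ 0)
    (μ a M : Matrix (Fin (N + 1)) (Fin (N + 1)) ℝ)
    (hμ : μ = Matrix.diagonal w)
    (ha : a = κ⁻¹ * μ)
    (hM : M = μ * a + aᵀ * μ - Matrix.vecMulVec w w) :
    (∀ p q, M p q = (∑ i, a i p * ψ i) * (∑ j, a j q * ψ j)) ∧
      M = Matrix.vecMulVec (aᵀ.mulVec ψ) (aᵀ.mulVec ψ) ∧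
      M.IsSymm ∧ M.PosSemidef := by
  -- The Lagrange basis polynomials
  set P : Fin (N + 1) → Polynomial ℝ := fun p => Lagrange.basis Finset.univ τ p with hP
  have hφP : ∀ p x, φ p x = (P p).eval x := by
    intro p x
    rw [hφ]
    simp only [hP, Lagrange.basis, Polynomial.eval_prod]
    refine Finset.prod_congr rfl fun k hk => ?_
    simp only [Lagrange.basisDivisor, Polynomial.eval_mul, Polynomial.eval_C,
      Polynomial.eval_sub, Polynomial.eval_X]
    rw [div_eq_mul_inv, mul_comm]
  have hφPfun : ∀ p, φ p = fun x => (P p).eval x := fun p => funext (hφP p)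
  have hderiv : ∀ p x, deriv (φ p) x = (P p).derivative.eval x := by
    intro p x
    rw [hφPfun p]
    exact ((P p).hasDerivAt x).deriv
  have hInt : ∀ r : Polynomial ℝ,
      IntervalIntegrable (fun x => r.eval x) MeasureTheory.volume 0 1 :=
    fun r => r.continuous.intervalIntegrable 0 1
  have hFTC : ∀ r : Polynomial ℝ,
      (∫ x in (0:ℝ)..1, r.derivative.eval x) = r.eval 1 - r.eval 0 := by
    intro r
    exact intervalIntegral.integral_eq_sub_of_hasDerivAt
      (fun x _ => r.hasDerivAt x) (hInt r.derivative)
  have hIform : ∀ p q, (∫ x in (0:ℝ)..1, deriv (φ p) x * φ q x)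
      = ∫ x in (0:ℝ)..1, ((P p).derivative * P q).eval x := by
    intro p q
    refine intervalIntegral.integral_congr fun x _ => ?_
    simp [hderiv, hφP]
  -- symmetrized integral identity (integration by parts for polynomials)
  have key1 : ∀ p q, (∫ x in (0:ℝ)..1, deriv (φ p) x * φ q x)
      + (∫ x in (0:ℝ)..1, deriv (φ q) x * φ p x)
      = ψt p * ψt q - ψ p * ψ q := by
    intro p q
    rw [hIform p q, hIform q p, ← intervalIntegral.integral_add (hInt _) (hInt _)]
    have h1 : (∫ x in (0:ℝ)..1, (((P p).derivative * P q).eval x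
        + ((P q).derivative * P p).eval x))
        = ∫ x in (0:ℝ)..1, (P p * P q).derivative.eval x := by
      refine intervalIntegral.integral_congr fun x _ => ?_
      simp only [Polynomial.derivative_mul, Polynomial.eval_add, Polynomial.eval_mul]
      ring
    rw [h1, hFTC]
    simp only [hψ, hψt, hφP, Polynomial.eval_mul]
  -- sum of Lagrange basis polynomials is 1
  have hsum : ∑ p, P p = 1 := Lagrange.sum_basis (Function.Injective.injOn hτ)
    Finset.univ_nonempty
  have hsψt : ∑ p, ψt p = 1 := by
    have h := congrArg (Polynomial.eval 1) hsum
    simp only [Polynomial.eval_finset_sum, Polynomial.eval_one] at h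
    calc ∑ p, ψt p = ∑ p, (P p).eval 1 := by
          refine Finset.sum_congr rfl fun p _ => ?_
          rw [hψt, hφP]
      _ = 1 := h
  -- column sums of κ
  have key2 : ∀ q, ∑ p, κ p q = ψt q := by
    intro q
    have hzero : ∑ p, (∫ x in (0:ℝ)..1, deriv (φ p) x * φ q x) = 0 := by
      have h1 : ∑ p, (∫ x in (0:ℝ)..1, deriv (φ p) x * φ q x)
          = ∫ x in (0:ℝ)..1, ∑ p, ((P p).derivative * P q).eval x := by
        simp only [hIform]
        exact (intervalIntegral.integral_finset_sum
          (fun p _ => hInt ((P p).derivative * P q))).symm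
      rw [h1]
      have h2 : ∀ x : ℝ, ∑ p, ((P p).derivative * P q).eval x = 0 := by
        intro x
        have : ∑ p, (P p).derivative * P q = 0 := by
          rw [← Finset.sum_mul]
          have : ∑ p, (P p).derivative = Polynomial.derivative (∑ p, P p) :=
            (map_sum Polynomial.derivative P Finset.univ).symm
          rw [this, hsum]
          simp
        calc ∑ p, ((P p).derivative * P q).eval x
            = (∑ p, (P p).derivative * P q).eval x := by
              rw [Polynomial.eval_finset_sum]
          _ = 0 := by rw [this]; simp
      rw [intervalIntegral.integral_congr (g := fun _ => (0:ℝ)) fun x _ => h2 x]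
      simp
    calc ∑ p, κ p q = ∑ p, (ψt p * ψt q - ∫ x in (0:ℝ)..1, deriv (φ p) x * φ q x) :=
          Finset.sum_congr rfl fun p _ => hκ p q
      _ = (∑ p, ψt p) * ψt q - ∑ p, (∫ x in (0:ℝ)..1, deriv (φ p) x * φ q x) := by
          rw [Finset.sum_sub_distrib, Finset.sum_mul]
      _ = ψt q := by rw [hsψt, hzero]; ring
  -- κ * a = μ
  have hκa : κ * a = μ := by
    rw [ha, ← Matrix.mul_assoc, Matrix.mul_nonsing_inv κ hinv, Matrix.one_mul]
  -- column sums of a weighted by ψt give w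
  have factB : ∀ q, ∑ i, a i q * ψt i = w q := by
    intro q
    calc ∑ i, a i q * ψt i = ∑ i, a i q * ∑ p, κ p i := by
          refine Finset.sum_congr rfl fun i _ => ?_
          rw [key2 i]
      _ = ∑ i, ∑ p, κ p i * a i q := by
          refine Finset.sum_congr rfl fun i _ => ?_
          rw [Finset.mul_sum]
          exact Finset.sum_congr rfl fun p _ => mul_comm _ _
      _ = ∑ p, ∑ i, κ p i * a i q := Finset.sum_comm
      _ = ∑ p, (κ * a) p q := by simp [Matrix.mul_apply]
      _ = ∑ p, μ p q := by rw [hκa]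
      _ = w q := by simp [hμ, Matrix.diagonal_apply]
  -- symmetrized κ
  have hκsym : ∀ i j, κ i j + κ j i = ψt i * ψt j + ψ i * ψ j := by
    intro i j
    rw [hκ i j, hκ j i]
    have h := key1 i j
    have hc1 : ψt j * ψt i = ψt i * ψt j := mul_comm _ _
    linarith
  -- matrix identities
  have hμsymm : μᵀ = μ := by rw [hμ, Matrix.diagonal_transpose]
  have h1 : μ * a = aᵀ * κᵀ * a := by
    have : μ = aᵀ * κᵀ := by
      rw [← Matrix.transpose_mul, hκa, hμsymm]
    rw [this]
  have h2 : aᵀ * μ = aᵀ * κ * a := by rw [← hκa, Matrix.mul_assoc]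
  -- expansion of aᵀ B a
  have expand : ∀ (B : Matrix (Fin (N + 1)) (Fin (N + 1)) ℝ) (p q),
      (aᵀ * B * a) p q = ∑ j, ∑ i, a i p * B i j * a j q := by
    intro B p q
    simp only [Matrix.mul_apply, Matrix.transpose_apply, Finset.sum_mul]
  have dy : ∀ (p q : Fin (N + 1)) (x y : Fin (N + 1) → ℝ),
      ∑ j, ∑ i, (a i p * x i) * (a j q * y j)
      = (∑ i, a i p * x i) * (∑ j, a j q * y j) := by
    intro p q x y
    rw [Finset.sum_mul_sum]
    exact Finset.sum_comm
  -- the central computation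
  have hMe : ∀ p q, M p q = (∑ i, a i p * ψ i) * (∑ j, a j q * ψ j) := by
    intro p q
    have hMpq : M p q = (aᵀ * κᵀ * a) p q + (aᵀ * κ * a) p q - w p * w q := by
      rw [hM, ← h1, ← h2]
      simp [Matrix.sub_apply, Matrix.add_apply, Matrix.vecMulVec_apply]
    rw [hMpq, expand, expand]
    have step : ∀ j, (∑ i, a i p * κᵀ i j * a j q) + (∑ i, a i p * κ i j * a j q)
        = (∑ i, (a i p * ψt i) * (a j q * ψt j))
          + ∑ i, (a i p * ψ i) * (a j q * ψ j) := by
      intro j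
      rw [← Finset.sum_add_distrib, ← Finset.sum_add_distrib]
      refine Finset.sum_congr rfl fun i _ => ?_
      have h := hκsym i j
      simp only [Matrix.transpose_apply]
      linear_combination (a i p * a j q) * h
    calc (∑ j, ∑ i, a i p * κᵀ i j * a j q)
          + (∑ j, ∑ i, a i p * κ i j * a j q) - w p * w q
        = (∑ j, ((∑ i, (a i p * ψt i) * (a j q * ψt j))
            + ∑ i, (a i p * ψ i) * (a j q * ψ j))) - w p * w q := by
          rw [← Finset.sum_add_distrib]
          rw [Finset.sum_congr rfl fun j _ => step j]
      _ = (∑ j, ∑ i, (a i p * ψt i) * (a j q * ψt j))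
            + (∑ j, ∑ i, (a i p * ψ i) * (a j q * ψ j)) - w p * w q := by
          rw [Finset.sum_add_distrib]
      _ = (∑ i, a i p * ψt i) * (∑ j, a j q * ψt j)
            + (∑ i, a i p * ψ i) * (∑ j, a j q * ψ j) - w p * w q := by
          rw [dy, dy]
      _ = (∑ i, a i p * ψ i) * (∑ j, a j q * ψ j) := by
          rw [factB p, factB q]; ring
  refine ⟨hMe, ?_, ?_, ?_⟩
  · ext p q
    rw [hMe p q]
    simp [Matrix.vecMulVec_apply, Matrix.mulVec, dotProduct,
      Matrix.transpose_apply]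
  · unfold Matrix.IsSymm
    ext p q
    rw [Matrix.transpose_apply, hMe p q, hMe q p]
    ring
  · refine Matrix.PosSemidef.of_dotProduct_mulVec_nonneg ?_ ?_
    · ext p q
      rw [Matrix.conjTranspose_apply, hMe p q, hMe q p]
      simp [mul_comm]
    · intro x
      have hval : dotProduct (star x) (M *ᵥ x)
          = (∑ p, (∑ i, a i p * ψ i) * x p) * (∑ p, (∑ i, a i p * ψ i) * x p) := by
        calc dotProduct (star x) (M *ᵥ x)
            = ∑ p, x p * ∑ q, ((∑ i, a i p * ψ i) * (∑ j, a j q * ψ j)) * x q := by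
              simp only [dotProduct, Matrix.mulVec, Pi.star_apply, star_trivial]
              refine Finset.sum_congr rfl fun p _ => ?_
              congr 1
              refine Finset.sum_congr rfl fun q _ => ?_
              rw [hMe p q]
          _ = ∑ p, ∑ q, ((∑ i, a i p * ψ i) * x p) * ((∑ j, a j q * ψ j) * x q) := by
              refine Finset.sum_congr rfl fun p _ => ?_
              rw [Finset.mul_sum]
              refine Finset.sum_congr rfl fun q _ => ?_
              ring
          _ = (∑ p, (∑ i, a i p * ψ i) * x p) * (∑ p, (∑ i, a i p * ψ i) * x p) := by
              rw [Finset.sum_mul_sum]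
      rw [hval]
      exact mul_self_nonneg _
end

section
/- Assume κ is invertible and every weight w_p is nonzero, let μ = diag(w_0,…,w_N) and a = κ⁻¹ μ. Then the algebraic-stability matrix M := μ a + aᵀ μ − w wᵀ has rank exactly 1; equivalently, the vector aᵀψ is nonzero (so in the general case the local DG solution satisfies q_n(0) ≠ u_n). -/
set_option maxHeartbeats 1000000

open scoped BigOperators
open Matrix

section aux
open Polynomial

/-- FTC for polynomials on [0,1]. -/
lemma aderdg_poly_ftc_s12 (Q : ℝ[X]) :
    ∫ x in (0:ℝ)..1, (derivative Q).eval x = Q.eval 1 - Q.eval 0 := by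
  refine intervalIntegral.integral_eq_sub_of_hasDerivAt (fun x _ => Q.hasDerivAt x) ?_
  exact (Q.derivative.continuous.intervalIntegrable _ _)

lemma aderdg_mul_vecMulVec_mul {n : Type*} [Fintype n] [DecidableEq n]
    (A D : Matrix n n ℝ) (x y : n → ℝ) :
    A * vecMulVec x y * Dᵀ = vecMulVec (A *ᵥ x) (D *ᵥ y) := by
  ext i j
  simp only [Matrix.mul_apply, vecMulVec_apply, mulVec, dotProduct, transpose_apply,
    Finset.sum_mul, Finset.mul_sum]
  apply Finset.sum_congr rfl; intro k _; apply Finset.sum_congr rfl; intro l _; ring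

end aux

/-- The algebraic-stability matrix M = μa + aᵀμ − w wᵀ has rank
exactly 1; equivalently, the vector aᵀψ is nonzero. -/
theorem aderdg_M_rank_one
    (N : ℕ) (τ : Fin (N + 1) → ℝ) (hτ : Function.Injective τ)
    (φ : Fin (N + 1) → ℝ → ℝ)
    (hφ : ∀ p x, φ p x = ∏ k ∈ Finset.univ.erase p, (x - τ k) / (τ p - τ k))
    (ψ ψt w : Fin (N + 1) → ℝ)
    (hψ : ∀ p, ψ p = φ p 0) (hψt : ∀ p, ψt p = φ p 1)
    (hw : ∀ p, w p = ∫ x in (0:ℝ)..1, φ p x)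
    (κ : Matrix (Fin (N + 1)) (Fin (N + 1)) ℝ)
    (hκ : ∀ p q, κ p q = ψt p * ψt q - ∫ x in (0:ℝ)..1, deriv (φ p) x * φ q x)
    (hinv : IsUnit κ.det) (hwne : ∀ p, w p ≠ 0)
    (μ a M : Matrix (Fin (N + 1)) (Fin (N + 1)) ℝ)
    (hμ : μ = Matrix.diagonal w)
    (ha : a = κ⁻¹ * μ)
    (hM : M = μ * a + aᵀ * μ - Matrix.vecMulVec w w) :
    M.rank = 1 ∧ aᵀ.mulVec ψ ≠ 0 := by
  classical
  set P : Fin (N + 1) → Polynomial ℝ := fun p => Lagrange.basis Finset.univ τ p with hP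
  -- φ is evaluation of the Lagrange basis polynomials
  have hφP : ∀ p x, φ p x = (P p).eval x := by
    intro p x
    rw [hφ, hP]
    simp only [Lagrange.basis, Polynomial.eval_prod]
    refine Finset.prod_congr rfl fun k _ => ?_
    rw [Lagrange.basisDivisor]
    simp [div_eq_inv_mul, mul_comm]
  have hφfun : ∀ p, φ p = fun x => (P p).eval x := fun p => funext (hφP p)
  -- derivative of φ
  have hder : ∀ p x, deriv (φ p) x = (Polynomial.derivative (P p)).eval x := by
    intro p x
    rw [hφfun p]
    exact ((P p).hasDerivAt x).deriv
  -- partition of unity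
  have hsumP : ∑ q, P q = 1 := by
    simpa [hP] using Lagrange.sum_basis (Set.injOn_of_injective hτ) Finset.univ_nonempty
  have hsumEval : ∀ x : ℝ, ∑ q, (P q).eval x = 1 := by
    intro x
    rw [← Polynomial.eval_finset_sum, hsumP, Polynomial.eval_one]
  have hsumψt : ∑ q, ψt q = 1 := by
    simp only [hψt, hφP]; exact hsumEval 1
  have hsumψ : ∑ q, ψ q = 1 := by
    simp only [hψ, hφP]; exact hsumEval 0
  have hsumDer : ∑ q, Polynomial.derivative (P q) = 0 := by
    rw [← map_sum, hsumP]; simp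
  -- rewrite κ in terms of polynomials
  have hκ' : ∀ p q, κ p q = ψt p * ψt q -
      ∫ x in (0:ℝ)..1, (Polynomial.derivative (P p)).eval x * (P q).eval x := by
    intro p q
    rw [hκ]
    congr 1
    refine intervalIntegral.integral_congr fun x _ => ?_
    rw [hder, hφP]
  have hInt : ∀ Q : Polynomial ℝ, IntervalIntegrable (fun x => Q.eval x)
      MeasureTheory.volume (0:ℝ) 1 := fun Q => Q.continuous.intervalIntegrable _ _
  -- κ *ᵥ 1 = ψ
  have hκone : κ *ᵥ (fun _ => (1:ℝ)) = ψ := by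
    funext p
    have h1 : (∑ q, ∫ x in (0:ℝ)..1,
        (Polynomial.derivative (P p)).eval x * (P q).eval x)
        = ∫ x in (0:ℝ)..1, (Polynomial.derivative (P p)).eval x := by
      rw [← intervalIntegral.integral_finset_sum
        (f := fun q x => (Polynomial.derivative (P p)).eval x * (P q).eval x) (fun q _ =>
        ((Polynomial.derivative (P p)).continuous.mul
          (P q).continuous).intervalIntegrable _ _)]
      refine intervalIntegral.integral_congr fun x _ => ?_
      rw [← Finset.mul_sum, hsumEval, mul_one]
    have h2 := aderdg_poly_ftc_s12 (P p)
    have hvp : (κ *ᵥ fun _ => (1:ℝ)) p = ∑ q, κ p q := by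
      simp [Matrix.mulVec, dotProduct]
    rw [hvp]
    calc ∑ q, κ p q
        = ∑ q, (ψt p * ψt q - ∫ x in (0:ℝ)..1,
            (Polynomial.derivative (P p)).eval x * (P q).eval x) := by
          exact Finset.sum_congr rfl fun q _ => hκ' p q
      _ = ψt p * (∑ q, ψt q) - (∑ q, ∫ x in (0:ℝ)..1,
            (Polynomial.derivative (P p)).eval x * (P q).eval x) := by
          rw [Finset.sum_sub_distrib, Finset.mul_sum]
      _ = ψt p * 1 - ((P p).eval 1 - (P p).eval 0) := by rw [hsumψt, h1, h2]
      _ = ψ p := by rw [hψ p, hψt p, hφP, hφP]; ring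
  -- 1 ᵥ* κ = ψt
  have honeκ : (fun _ => (1:ℝ)) ᵥ* κ = ψt := by
    funext q
    have h1 : (∑ p, ∫ x in (0:ℝ)..1,
        (Polynomial.derivative (P p)).eval x * (P q).eval x) = 0 := by
      rw [← intervalIntegral.integral_finset_sum
        (f := fun p x => (Polynomial.derivative (P p)).eval x * (P q).eval x) (fun p _ =>
        ((Polynomial.derivative (P p)).continuous.mul
          (P q).continuous).intervalIntegrable _ _)]
      calc (∫ x in (0:ℝ)..1, ∑ p, (Polynomial.derivative (P p)).eval x * (P q).eval x)
          = ∫ x in (0:ℝ)..1, (0:ℝ) := by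
            refine intervalIntegral.integral_congr fun x _ => ?_
            rw [← Finset.sum_mul, ← Polynomial.eval_finset_sum, hsumDer]
            simp
        _ = 0 := intervalIntegral.integral_zero
    have hvq : ((fun _ => (1:ℝ)) ᵥ* κ) q = ∑ p, κ p q := by
      simp [Matrix.vecMul, dotProduct]
    rw [hvq]
    calc ∑ p, κ p q
        = ∑ p, (ψt p * ψt q - ∫ x in (0:ℝ)..1,
            (Polynomial.derivative (P p)).eval x * (P q).eval x) := by
          exact Finset.sum_congr rfl fun p _ => hκ' p q
      _ = (∑ p, ψt p) * ψt q - (∑ p, ∫ x in (0:ℝ)..1,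
            (Polynomial.derivative (P p)).eval x * (P q).eval x) := by
          rw [Finset.sum_sub_distrib, Finset.sum_mul]
      _ = ψt q := by rw [hsumψt, h1]; ring
  -- symmetrized κ
  have hκsym : κ + κᵀ = vecMulVec ψt ψt + vecMulVec ψ ψ := by
    ext p q
    have hibp : (∫ x in (0:ℝ)..1,
          (Polynomial.derivative (P p)).eval x * (P q).eval x)
        + (∫ x in (0:ℝ)..1,
          (Polynomial.derivative (P q)).eval x * (P p).eval x)
        = ψt p * ψt q - ψ p * ψ q := by
      have h2 := aderdg_poly_ftc_s12 (P p * P q)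
      rw [← intervalIntegral.integral_add
        (f := fun x => (Polynomial.derivative (P p)).eval x * (P q).eval x)
        (g := fun x => (Polynomial.derivative (P q)).eval x * (P p).eval x)
        (((Polynomial.derivative (P p)).continuous.mul
          (P q).continuous).intervalIntegrable _ _)
        (((Polynomial.derivative (P q)).continuous.mul
          (P p).continuous).intervalIntegrable _ _)]
      have : (∫ x in (0:ℝ)..1, ((Polynomial.derivative (P p)).eval x * (P q).eval x
          + (Polynomial.derivative (P q)).eval x * (P p).eval x))
          = ∫ x in (0:ℝ)..1, (Polynomial.derivative (P p * P q)).eval x := by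
        refine intervalIntegral.integral_congr fun x _ => ?_
        rw [Polynomial.derivative_mul, Polynomial.eval_add, Polynomial.eval_mul,
          Polynomial.eval_mul]
        ring
      rw [this, h2, Polynomial.eval_mul, Polynomial.eval_mul,
        hψt p, hψt q, hψ p, hψ q, hφP, hφP, hφP, hφP]
    simp only [Matrix.add_apply, transpose_apply, vecMulVec_apply, hκ' p q, hκ' q p]
    rw [sub_add_sub_comm, hibp]
    ring
  -- matrix algebra
  set B := κ⁻¹ with hB
  have hBκ : B * κ = 1 := Matrix.nonsing_inv_mul κ hinv
  have hκB : κ * B = 1 := Matrix.mul_nonsing_inv κ hinv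
  have hμw : μ *ᵥ (fun _ => (1:ℝ)) = w := by
    funext p; rw [hμ]; simp [mulVec_diagonal]
  have hBψ : B *ᵥ ψ = fun _ => (1:ℝ) := by
    rw [← hκone, mulVec_mulVec, hBκ, one_mulVec]
  -- M = (μ B ψt)(μ B ψt)ᵀ
  set u : Fin (N + 1) → ℝ := μ *ᵥ (B *ᵥ ψt) with hu
  have hμT : μᵀ = μ := by rw [hμ, diagonal_transpose]
  have haT : aᵀ = μ * Bᵀ := by rw [ha, Matrix.transpose_mul, hμT]
  have key : μ * B * (κ + κᵀ) * (μ * B)ᵀ = μ * a + aᵀ * μ := by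
    rw [Matrix.transpose_mul, hμT, haT, ha]
    have e1 : μ * B * (κ + κᵀ) * (Bᵀ * μ)
        = μ * (B * κ) * Bᵀ * μ + μ * (B * (κᵀ * Bᵀ)) * μ := by noncomm_ring
    rw [e1, hBκ, ← Matrix.transpose_mul, hBκ, Matrix.transpose_one, Matrix.mul_one]
    noncomm_ring
  have key2 : μ * B * (vecMulVec ψt ψt + vecMulVec ψ ψ) * (μ * B)ᵀ
      = vecMulVec u u + vecMulVec w w := by
    rw [Matrix.mul_add, Matrix.add_mul, aderdg_mul_vecMulVec_mul, aderdg_mul_vecMulVec_mul]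
    rw [← Matrix.mulVec_mulVec, ← Matrix.mulVec_mulVec, hBψ, hμw]
  have hMu : M = vecMulVec u u := by
    have h3 : μ * a + aᵀ * μ = vecMulVec u u + vecMulVec w w := by
      rw [← key, hκsym, key2]
    rw [hM, h3, add_sub_cancel_right]
  -- nonvanishing facts
  have hψtne : ψt ≠ 0 := by
    intro h; rw [h] at hsumψt; simp at hsumψt
  have hψne : ψ ≠ 0 := by
    intro h; rw [h] at hsumψ; simp at hsumψ
  have hμinj : ∀ v : Fin (N + 1) → ℝ, μ *ᵥ v = 0 → v = 0 := by
    intro v hv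
    funext p
    have := congrFun hv p
    rw [hμ, mulVec_diagonal] at this
    exact (mul_eq_zero.mp this).resolve_left (hwne p)
  have hune : u ≠ 0 := by
    intro h
    have h1 : B *ᵥ ψt = 0 := hμinj _ (by rw [← hu, h])
    have h2 : ψt = 0 := by
      have := congrArg (fun v => κ *ᵥ v) h1
      simpa [Matrix.mulVec_mulVec, hκB] using this
    exact hψtne h2
  -- second conclusion
  have haψ : aᵀ *ᵥ ψ ≠ 0 := by
    rw [haT, ← Matrix.mulVec_mulVec]
    intro h
    have h1 : Bᵀ *ᵥ ψ = 0 := hμinj _ h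
    have h2 : ψ = 0 := by
      have := congrArg (fun v => κᵀ *ᵥ v) h1
      have hκTBT : κᵀ * Bᵀ = 1 := by rw [← Matrix.transpose_mul, hBκ, Matrix.transpose_one]
      simpa [Matrix.mulVec_mulVec, hκTBT] using this
    exact hψne h2
  refine ⟨?_, haψ⟩
  -- rank computation
  obtain ⟨p, hp⟩ := Function.ne_iff.mp hune
  have hple : M.rank ≤ 1 := by
    rw [hMu, Matrix.vecMulVec_eq (Fin 1)]
    exact le_trans (Matrix.rank_mul_le_right _ _)
      (le_trans (Matrix.rank_le_card_height _) (by simp))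
  have hpos : 0 < M.rank := by
    rw [Matrix.rank]
    rw [Module.finrank_pos_iff_exists_ne_zero]
    refine ⟨⟨M *ᵥ Pi.single p 1, LinearMap.mem_range.mpr ⟨Pi.single p 1, by simp [Matrix.mulVecLin_apply]⟩⟩, ?_⟩
    intro h
    have hval : (M *ᵥ Pi.single p 1) = 0 := by
      simpa using congrArg Subtype.val h
    have h0 : (M *ᵥ Pi.single p 1) p = 0 := congrFun hval p
    rw [hMu] at h0
    have h1 : u p * u p = 0 := by
      simpa [Matrix.mulVec_single, vecMulVec_apply] using h0
    exact hp (mul_self_eq_zero.mp h1)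
  omega
end

section
/- Assume κ is invertible and every weight w_p is nonzero, let a = κ⁻¹ · diag(w), let 𝟙 ∈ ℝ^{N+1} be the all-ones vector and w the weight vector. Then the kernel of the matrix a − 𝟙 wᵀ is the one-dimensional span of the vector c with entries c_p = ψ_p / w_p, and hence rank(a − 𝟙 wᵀ) = N; in particular det(a − 𝟙 wᵀ) = 0. -/
open scoped BigOperators
open Matrix

/-- The kernel of a − 𝟙wᵀ is the one-dimensional span of the
vector c with c_p = ψ_p / w_p; hence rank(a − 𝟙wᵀ) = N and det(a − 𝟙wᵀ) = 0. -/
theorem aderdg_kernel_of_a_sub_one_wT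
    (N : ℕ) (τ : Fin (N + 1) → ℝ) (hτ : Function.Injective τ)
    (φ : Fin (N + 1) → ℝ → ℝ)
    (hφ : ∀ p x, φ p x = ∏ k ∈ Finset.univ.erase p, (x - τ k) / (τ p - τ k))
    (ψ ψt w : Fin (N + 1) → ℝ)
    (hψ : ∀ p, ψ p = φ p 0) (hψt : ∀ p, ψt p = φ p 1)
    (hw : ∀ p, w p = ∫ x in (0:ℝ)..1, φ p x)
    (κ : Matrix (Fin (N + 1)) (Fin (N + 1)) ℝ)
    (hκ : ∀ p q, κ p q = ψt p * ψt q - ∫ x in (0:ℝ)..1, deriv (φ p) x * φ q x)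
    (hinv : IsUnit κ.det) (hwne : ∀ p, w p ≠ 0)
    (a B : Matrix (Fin (N + 1)) (Fin (N + 1)) ℝ)
    (ha : a = κ⁻¹ * Matrix.diagonal w)
    (hB : B = a - Matrix.vecMulVec (fun _ => (1:ℝ)) w) :
    (∀ v : Fin (N + 1) → ℝ,
        B.mulVec v = 0 ↔ ∃ t : ℝ, v = t • fun p => ψ p / w p) ∧
      B.rank = N ∧ B.det = 0 := by
  classical
  set c : Fin (N + 1) → ℝ := fun p => ψ p / w p with hc
  -- polynomial representation of the Lagrange basis
  set P : Fin (N + 1) → Polynomial ℝ := fun p => Lagrange.basis Finset.univ τ p with hPdef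
  have hφP : ∀ p, φ p = fun x => (P p).eval x := by
    intro p
    funext x
    rw [hφ]
    simp only [hPdef, Lagrange.basis, Lagrange.basisDivisor, Polynomial.eval_prod,
      Polynomial.eval_mul, Polynomial.eval_sub, Polynomial.eval_C, Polynomial.eval_X]
    refine Finset.prod_congr rfl fun k _ => ?_
    rw [div_eq_mul_inv, mul_comm]
  -- partition of unity
  have hsum : ∀ x : ℝ, ∑ q, φ q x = 1 := by
    intro x
    have h := Lagrange.sum_basis (Set.injOn_of_injective hτ)
      (Finset.univ_nonempty (α := Fin (N + 1)))
    have h2 := congrArg (Polynomial.eval x) h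
    simpa [Polynomial.eval_finset_sum, hφP] using h2
  have hsumψ : ∑ p, ψ p = 1 := by
    simp only [hψ]; exact hsum 0
  have hsumψt : ∑ p, ψt p = 1 := by
    simp only [hψt]; exact hsum 1
  have hcont : ∀ p, Continuous (φ p) := by
    intro p; rw [hφP]; exact (P p).continuous_aeval
  have hderiv : ∀ p x, deriv (φ p) x = ((P p).derivative).eval x := by
    intro p x; rw [hφP]; exact Polynomial.deriv (P p)
  have hcontd : ∀ p, Continuous (deriv (φ p)) := by
    intro p
    have : deriv (φ p) = fun x => ((P p).derivative).eval x := funext (hderiv p)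
    rw [this]; exact ((P p).derivative).continuous_aeval
  -- κ 𝟙 = ψ
  have hκψ : κ.mulVec (fun _ => (1:ℝ)) = ψ := by
    funext p
    have hint : ∀ q ∈ (Finset.univ : Finset (Fin (N+1))),
        IntervalIntegrable (fun x => deriv (φ p) x * φ q x) MeasureTheory.volume 0 1 :=
      fun q _ => ((hcontd p).mul (hcont q)).intervalIntegrable 0 1
    have hI : ∑ q, ∫ x in (0:ℝ)..1, deriv (φ p) x * φ q x
        = ∫ x in (0:ℝ)..1, deriv (φ p) x := by
      rw [← intervalIntegral.integral_finset_sum hint]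
      refine intervalIntegral.integral_congr fun x _ => ?_
      rw [← Finset.mul_sum, hsum x, mul_one]
    have hFTC : ∫ x in (0:ℝ)..1, deriv (φ p) x = ψt p - ψ p := by
      rw [intervalIntegral.integral_deriv_eq_sub
        (fun x _ => by rw [hφP]; exact (P p).differentiable.differentiableAt)
        ((hcontd p).intervalIntegrable 0 1), hψt, hψ]
    simp only [Matrix.mulVec, dotProduct, hκ, mul_one]
    rw [Finset.sum_sub_distrib, ← Finset.mul_sum, hsumψt, hI, hFTC]
    ring
  -- diag(w) c = ψ
  have hDc : (Matrix.diagonal w).mulVec c = ψ := by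
    funext p
    simp only [Matrix.mulVec_diagonal, hc]
    rw [mul_comm]
    exact div_mul_cancel₀ _ (hwne p)
  -- κ⁻¹ ψ = 𝟙
  have hκinvψ : κ⁻¹.mulVec ψ = fun _ => (1:ℝ) := by
    rw [← hκψ, Matrix.mulVec_mulVec, Matrix.nonsing_inv_mul κ hinv, Matrix.one_mulVec]
  -- expression for B v
  have hBv : ∀ v : Fin (N+1) → ℝ,
      B.mulVec v = κ⁻¹.mulVec ((Matrix.diagonal w).mulVec v) - (w ⬝ᵥ v) • (fun _ => (1:ℝ)) := by
    intro v
    rw [hB, ha, Matrix.sub_mulVec, ← Matrix.mulVec_mulVec]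
    congr 1
    funext p
    simp only [Matrix.mulVec, dotProduct, Matrix.vecMulVec_apply, Pi.smul_apply,
      smul_eq_mul, one_mul, mul_one]
  have hwc : w ⬝ᵥ c = 1 := by
    simp only [dotProduct, hc]
    rw [← hsumψ]
    exact Finset.sum_congr rfl fun p _ => mul_div_cancel₀ _ (hwne p)
  have hBc : B.mulVec c = 0 := by
    rw [hBv, hDc, hκinvψ, hwc, one_smul, sub_self]
  -- the kernel characterization
  have hker : ∀ v : Fin (N + 1) → ℝ, B.mulVec v = 0 ↔ ∃ t : ℝ, v = t • c := by
    intro v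
    constructor
    · intro hv
      refine ⟨w ⬝ᵥ v, ?_⟩
      have h1 : κ⁻¹.mulVec ((Matrix.diagonal w).mulVec v) = (w ⬝ᵥ v) • (fun _ => (1:ℝ)) := by
        have h := hBv v
        rw [hv] at h
        exact sub_eq_zero.mp h.symm
      have h2 : (Matrix.diagonal w).mulVec v = (w ⬝ᵥ v) • ψ := by
        have h := congrArg (κ.mulVec ·) h1
        simpa [Matrix.mulVec_mulVec, ← Matrix.mul_assoc, Matrix.mul_nonsing_inv κ hinv,
          Matrix.one_mul, Matrix.one_mulVec, Matrix.mulVec_smul, hκψ] using h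
      funext p
      have h3 := congrFun h2 p
      simp only [Matrix.mulVec_diagonal, Pi.smul_apply, smul_eq_mul] at h3
      simp only [Pi.smul_apply, smul_eq_mul, hc]
      rw [eq_comm, ← mul_div_assoc, div_eq_iff (hwne p)]
      linear_combination -h3
    · rintro ⟨t, rfl⟩
      rw [Matrix.mulVec_smul, hBc, smul_zero]
  have hcne : c ≠ 0 := by
    intro h0
    obtain ⟨p, hp⟩ : ∃ p, ψ p ≠ 0 := by
      by_contra hall
      push_neg at hall
      rw [Finset.sum_eq_zero (fun p _ => hall p)] at hsumψ
      exact one_ne_zero hsumψ.symm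
    have h1 := congrFun h0 p
    simp only [hc, Pi.zero_apply] at h1
    rcases div_eq_zero_iff.mp h1 with h | h
    · exact hp h
    · exact hwne p h
  refine ⟨hker, ?_, ?_⟩
  · have hkerspan : LinearMap.ker B.mulVecLin = Submodule.span ℝ {c} := by
      ext v
      rw [LinearMap.mem_ker, Matrix.mulVecLin_apply, Submodule.mem_span_singleton, hker v]
      constructor
      · rintro ⟨t, rfl⟩; exact ⟨t, rfl⟩
      · rintro ⟨t, rfl⟩; exact ⟨t, rfl⟩
    have hrn := LinearMap.finrank_range_add_finrank_ker B.mulVecLin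
    rw [hkerspan, finrank_span_singleton hcne, Module.finrank_fin_fun] at hrn
    show Module.finrank ℝ (LinearMap.range B.mulVecLin) = N
    omega
  · by_contra hdet
    have hu : IsUnit B.det := isUnit_iff_ne_zero.mpr hdet
    have h := congrArg (B⁻¹.mulVec ·) hBc
    simp only [Matrix.mulVec_mulVec, Matrix.nonsing_inv_mul B hu, Matrix.one_mulVec,
      Matrix.mulVec_zero] at h
    exact hcne h
end

section
/- (Padé structure of the stability function.) Assume κ is invertible and every weight w_p is nonzero, and let a = κ⁻¹ · diag(w). Then the denominator polynomial z ↦ det(I − z a) has degree exactly N + 1 (its leading coefficient is (−1)^{N+1} det a ≠ 0), while the numerator polynomial z ↦ det(I − z a + z 𝟙 wᵀ) has degree at most N, i.e. its coefficient of z^{N+1}, which equals det(𝟙 wᵀ − a), vanishes. -/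
open scoped BigOperators
open Matrix Polynomial

/-- Padé structure of the stability function: the denominator
polynomial det(I − z a) has degree exactly N+1 with leading coefficient
(−1)^{N+1} det a ≠ 0, while the numerator polynomial det(I − z a + z 𝟙 wᵀ)
has degree at most N: its coefficient of z^{N+1}, equal to det(𝟙 wᵀ − a),
vanishes. -/
theorem aderdg_pade_structure
    (N : ℕ) (τ : Fin (N + 1) → ℝ) (hτ : Function.Injective τ)
    (φ : Fin (N + 1) → ℝ → ℝ)
    (hφ : ∀ p x, φ p x = ∏ k ∈ Finset.univ.erase p, (x - τ k) / (τ p - τ k))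
    (ψ ψt w : Fin (N + 1) → ℝ)
    (hψ : ∀ p, ψ p = φ p 0) (hψt : ∀ p, ψt p = φ p 1)
    (hw : ∀ p, w p = ∫ x in (0:ℝ)..1, φ p x)
    (κ : Matrix (Fin (N + 1)) (Fin (N + 1)) ℝ)
    (hκ : ∀ p q, κ p q = ψt p * ψt q - ∫ x in (0:ℝ)..1, deriv (φ p) x * φ q x)
    (hinv : IsUnit κ.det) (hwne : ∀ p, w p ≠ 0)
    (a : Matrix (Fin (N + 1)) (Fin (N + 1)) ℝ)
    (ha : a = κ⁻¹ * Matrix.diagonal w)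
    (Dpoly Ppoly : Polynomial ℝ)
    (hD : Dpoly = ((1 : Matrix (Fin (N + 1)) (Fin (N + 1)) (Polynomial ℝ)) -
      (Polynomial.X : Polynomial ℝ) • a.map Polynomial.C).det)
    (hP : Ppoly = ((1 : Matrix (Fin (N + 1)) (Fin (N + 1)) (Polynomial ℝ)) -
      (Polynomial.X : Polynomial ℝ) • a.map Polynomial.C +
      (Polynomial.X : Polynomial ℝ) •
        (Matrix.vecMulVec (fun _ => (1:ℝ)) w).map Polynomial.C).det) :
    a.det ≠ 0 ∧
      Dpoly.natDegree = N + 1 ∧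
      Dpoly.coeff (N + 1) = (-1) ^ (N + 1) * a.det ∧
      Ppoly.natDegree ≤ N ∧
      Ppoly.coeff (N + 1) = (Matrix.vecMulVec (fun _ => (1:ℝ)) w - a).det ∧
      (Matrix.vecMulVec (fun _ => (1:ℝ)) w - a).det = 0 := by
  have hκdet : κ.det ≠ 0 := hinv.ne_zero
  -- φ as evaluation of Lagrange basis polynomials
  set P : Fin (N + 1) → Polynomial ℝ := fun p => Lagrange.basis Finset.univ τ p with hPdef
  have hφP : ∀ p, φ p = fun x => (P p).eval x := by
    intro p; funext x
    rw [hφ, hPdef]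
    simp only [Lagrange.basis, Polynomial.eval_prod]
    refine Finset.prod_congr rfl fun k _ => ?_
    rw [Lagrange.basisDivisor]
    simp [div_eq_inv_mul]
  have sum1 : ∀ x : ℝ, ∑ p, φ p x = 1 := by
    intro x
    have h := Lagrange.sum_basis (v := τ) (s := Finset.univ) (hτ.injOn)
      ⟨0, Finset.mem_univ 0⟩
    calc ∑ p, φ p x = ∑ p, (P p).eval x := by simp_rw [hφP]
      _ = (∑ p, P p).eval x := by rw [Polynomial.eval_finset_sum]
      _ = 1 := by rw [hPdef] at *; rw [h, Polynomial.eval_one]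
  have hderiv : ∀ p, deriv (φ p) = fun x => ((P p).derivative).eval x := by
    intro p; funext x
    rw [hφP]
    exact Polynomial.deriv (p := P p)
  -- row sums of κ
  have rowsum : ∀ p, ∑ q, κ p q = ψ p := by
    intro p
    have hint : ∀ q : Fin (N + 1),
        IntervalIntegrable (fun x => deriv (φ p) x * φ q x) MeasureTheory.volume 0 1 := by
      intro q
      rw [hderiv, hφP]
      exact (((P p).derivative.continuous).mul ((P q).continuous)).intervalIntegrable 0 1
    have hsum_int : ∑ q, (∫ x in (0:ℝ)..1, deriv (φ p) x * φ q x)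
        = ∫ x in (0:ℝ)..1, deriv (φ p) x := by
      rw [← intervalIntegral.integral_finset_sum (fun q _ => hint q)]
      congr 1
      funext x
      rw [← Finset.mul_sum, sum1, mul_one]
    have hftc : ∫ x in (0:ℝ)..1, deriv (φ p) x = φ p 1 - φ p 0 := by
      refine intervalIntegral.integral_deriv_eq_sub (fun x _ => ?_) ?_
      · rw [hφP]; exact (P p).differentiable.differentiableAt
      · rw [hderiv]
        exact ((P p).derivative.continuous).intervalIntegrable 0 1
    have hsumψt : ∑ q, ψt q = 1 := by
      simp_rw [hψt]; exact sum1 1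
    calc ∑ q, κ p q = ∑ q, (ψt p * ψt q) - ∑ q, (∫ x in (0:ℝ)..1, deriv (φ p) x * φ q x) := by
          simp_rw [hκ]; rw [Finset.sum_sub_distrib]
      _ = ψt p * 1 - (φ p 1 - φ p 0) := by rw [← Finset.mul_sum, hsumψt, hsum_int, hftc]
      _ = ψ p := by rw [hψt, hψ]; ring
  have hsumψ : ∑ p, ψ p = 1 := by simp_rw [hψ]; exact sum1 0
  -- determinant of a
  have hdeta : a.det = (κ.det)⁻¹ * ∏ p, w p := by
    rw [ha, Matrix.det_mul, Matrix.det_nonsing_inv, Matrix.det_diagonal, Ring.inverse_eq_inv']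
  have hane : a.det ≠ 0 := by
    rw [hdeta]
    exact mul_ne_zero (inv_ne_zero hκdet) (Finset.prod_ne_zero_iff.mpr fun p _ => hwne p)
  -- the singular matrix
  have hM0 : (Matrix.vecMulVec ψ w - Matrix.diagonal w).det = 0 := by
    rw [← Matrix.exists_vecMul_eq_zero_iff]
    refine ⟨fun _ => (1 : ℝ), ?_, ?_⟩
    · intro h
      have := congrFun h 0
      simp at this
    · funext q
      simp only [Matrix.vecMul, dotProduct, Matrix.sub_apply, Matrix.vecMulVec_apply,
        Matrix.diagonal_apply, one_mul, mul_sub, Finset.sum_sub_distrib, ← Finset.sum_mul,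
        hsumψ]
      simp [Finset.sum_ite_eq, Pi.zero_apply]
  have hκV : κ * Matrix.vecMulVec (fun _ => (1:ℝ)) w = Matrix.vecMulVec ψ w := by
    ext p q
    simp only [Matrix.mul_apply, Matrix.vecMulVec_apply, one_mul]
    rw [← Finset.sum_mul, rowsum]
  have hVa : Matrix.vecMulVec (fun _ => (1:ℝ)) w - a
      = κ⁻¹ * (Matrix.vecMulVec ψ w - Matrix.diagonal w) := by
    rw [← hκV, Matrix.mul_sub, ← Matrix.mul_assoc, Matrix.nonsing_inv_mul κ hinv, one_mul, ha]
  have hdetV : (Matrix.vecMulVec (fun _ => (1:ℝ)) w - a).det = 0 := by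
    rw [hVa, Matrix.det_mul, hM0, mul_zero]
  -- rewriting the polynomial matrices in X • A.map C + B.map C form
  have hone : ((1 : Matrix (Fin (N + 1)) (Fin (N + 1)) ℝ)).map (Polynomial.C)
      = (1 : Matrix (Fin (N + 1)) (Fin (N + 1)) (Polynomial ℝ)) :=
    Matrix.map_one _ (map_zero _) (map_one _)
  have hDform : ((1 : Matrix (Fin (N + 1)) (Fin (N + 1)) (Polynomial ℝ)) -
      (Polynomial.X : Polynomial ℝ) • a.map Polynomial.C)
      = (Polynomial.X : Polynomial ℝ) • (-a).map Polynomial.C +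
        ((1 : Matrix (Fin (N + 1)) (Fin (N + 1)) ℝ)).map (Polynomial.C) := by
    have hneg : (-a).map (Polynomial.C : ℝ → Polynomial ℝ) = -(a.map Polynomial.C) := by
      ext i j; simp
    rw [hone, hneg, smul_neg, sub_eq_neg_add]
  have hPform : ((1 : Matrix (Fin (N + 1)) (Fin (N + 1)) (Polynomial ℝ)) -
      (Polynomial.X : Polynomial ℝ) • a.map Polynomial.C +
      (Polynomial.X : Polynomial ℝ) •
        (Matrix.vecMulVec (fun _ => (1:ℝ)) w).map Polynomial.C)
      = (Polynomial.X : Polynomial ℝ) •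
          ((Matrix.vecMulVec (fun _ => (1:ℝ)) w - a)).map Polynomial.C +
        ((1 : Matrix (Fin (N + 1)) (Fin (N + 1)) ℝ)).map (Polynomial.C) := by
    have hsub : (Matrix.vecMulVec (fun _ => (1:ℝ)) w - a).map (Polynomial.C : ℝ → Polynomial ℝ)
        = (Matrix.vecMulVec (fun _ => (1:ℝ)) w).map Polynomial.C - a.map Polynomial.C := by
      ext i j; simp
    rw [hone, hsub, smul_sub]
    abel
  have hcard : Fintype.card (Fin (N + 1)) = N + 1 := Fintype.card_fin _
  -- D : coefficient and degree
  have hDcoeff : Dpoly.coeff (N + 1) = (-1) ^ (N + 1) * a.det := by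
    have h := Polynomial.coeff_det_X_add_C_card (-a) (1 : Matrix (Fin (N + 1)) (Fin (N + 1)) ℝ)
    rw [hcard, Matrix.det_neg, hcard] at h
    rw [hD, hDform, h]
  have hDdegle : Dpoly.natDegree ≤ N + 1 := by
    have h := Polynomial.natDegree_det_X_add_C_le (-a) (1 : Matrix (Fin (N + 1)) (Fin (N + 1)) ℝ)
    rw [hcard] at h
    rw [hD, hDform]; exact h
  have hDdeg : Dpoly.natDegree = N + 1 := by
    refine le_antisymm hDdegle (Polynomial.le_natDegree_of_ne_zero ?_)
    rw [hDcoeff]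
    exact mul_ne_zero (pow_ne_zero _ (by norm_num)) hane
  -- P : coefficient and degree
  have hPcoeff : Ppoly.coeff (N + 1) = (Matrix.vecMulVec (fun _ => (1:ℝ)) w - a).det := by
    have h := Polynomial.coeff_det_X_add_C_card (Matrix.vecMulVec (fun _ => (1:ℝ)) w - a)
      (1 : Matrix (Fin (N + 1)) (Fin (N + 1)) ℝ)
    rw [hcard] at h
    rw [hP, hPform, h]
  have hPdegle : Ppoly.natDegree ≤ N + 1 := by
    have h := Polynomial.natDegree_det_X_add_C_le (Matrix.vecMulVec (fun _ => (1:ℝ)) w - a)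
      (1 : Matrix (Fin (N + 1)) (Fin (N + 1)) ℝ)
    rw [hcard] at h
    rw [hP, hPform]; exact h
  have hPdeg : Ppoly.natDegree ≤ N := by
    rw [Polynomial.natDegree_le_iff_coeff_eq_zero]
    intro m hm
    rcases eq_or_lt_of_le (Nat.succ_le_of_lt hm) with h | h
    · rw [← h, hPcoeff, hdetV]
    · exact Polynomial.coeff_eq_zero_of_natDegree_lt (lt_of_le_of_lt hPdegle h)
  exact ⟨hane, hDdeg, hDcoeff, hPdeg, hPcoeff, hdetV⟩
end

section
/- (L-stability limit of the IRK-GL-ADER-DG method.) Assume κ is invertible and every weight w_p is nonzero, and let a = κ⁻¹ · diag(w). Then a is invertible and wᵀ a⁻¹ 𝟙 = Σ_{p,q=0}^{N} w_p (a⁻¹)_{pq} = 1; consequently the stability function R(z) = 1 + z wᵀ (I − z a)⁻¹ 𝟙 tends to 1 − wᵀ a⁻¹ 𝟙 = 0 as the real variable z tends to +∞ (and likewise as z → −∞). -/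
open scoped BigOperators
open Matrix Filter

/-- L-stability limit of the IRK-GL-ADER-DG method: a is
invertible, wᵀ a⁻¹ 𝟙 = 1, and the stability function
R(z) = 1 + z wᵀ (I − z a)⁻¹ 𝟙 tends to 1 − wᵀ a⁻¹ 𝟙 = 0 as z → +∞ and as
z → −∞. -/
theorem aderdg_L_stability_limit
    (N : ℕ) (τ : Fin (N + 1) → ℝ) (hτ : Function.Injective τ)
    (φ : Fin (N + 1) → ℝ → ℝ)
    (hφ : ∀ p x, φ p x = ∏ k ∈ Finset.univ.erase p, (x - τ k) / (τ p - τ k))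
    (ψ ψt w : Fin (N + 1) → ℝ)
    (hψ : ∀ p, ψ p = φ p 0) (hψt : ∀ p, ψt p = φ p 1)
    (hw : ∀ p, w p = ∫ x in (0:ℝ)..1, φ p x)
    (κ : Matrix (Fin (N + 1)) (Fin (N + 1)) ℝ)
    (hκ : ∀ p q, κ p q = ψt p * ψt q - ∫ x in (0:ℝ)..1, deriv (φ p) x * φ q x)
    (hinv : IsUnit κ.det) (hwne : ∀ p, w p ≠ 0)
    (a : Matrix (Fin (N + 1)) (Fin (N + 1)) ℝ)
    (ha : a = κ⁻¹ * Matrix.diagonal w)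
    (R : ℝ → ℝ)
    (hR : ∀ z, R z = 1 + z * (w ⬝ᵥ ((1 : Matrix (Fin (N + 1)) (Fin (N + 1)) ℝ)
      - z • a)⁻¹.mulVec (fun _ => (1:ℝ)))) :
    IsUnit a.det ∧
      (∑ p, ∑ q, w p * a⁻¹ p q = 1) ∧
      (1 - w ⬝ᵥ a⁻¹.mulVec (fun _ => (1:ℝ)) = 0) ∧
      Tendsto R atTop (nhds 0) ∧
      Tendsto R atBot (nhds 0) := by
  classical
  -- polynomial representation of φ
  have hφP : ∀ p, φ p = fun x => (Lagrange.basis Finset.univ τ p).eval x := by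
    intro p; funext x
    rw [hφ p x, Lagrange.basis, Polynomial.eval_prod]
    refine Finset.prod_congr rfl fun k hk => ?_
    simp [Lagrange.basisDivisor, div_eq_mul_inv, mul_comm]
  -- partition of unity
  have hsum1 : ∀ x : ℝ, ∑ p, φ p x = 1 := by
    intro x
    simp only [hφP]
    rw [← Polynomial.eval_finset_sum,
      Lagrange.sum_basis hτ.injOn Finset.univ_nonempty, Polynomial.eval_one]
  have hdiff : ∀ p x, DifferentiableAt ℝ (φ p) x := by
    intro p x; rw [hφP]; exact (Lagrange.basis Finset.univ τ p).differentiableAt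
  have hderiv0 : ∀ x : ℝ, ∑ p, deriv (φ p) x = 0 := by
    intro x
    have h1 : deriv (fun y => ∑ p, φ p y) x = ∑ p, deriv (φ p) x :=
      deriv_fun_sum fun p _ => hdiff p x
    have h2 : (fun y : ℝ => ∑ p, φ p y) = fun _ => (1:ℝ) := funext hsum1
    rw [h2, deriv_const] at h1
    exact h1.symm
  have hderivC : ∀ p, Continuous (deriv (φ p)) := by
    intro p
    have : deriv (φ p) = fun x => ((Lagrange.basis Finset.univ τ p).derivative).eval x := by
      funext x; simp only [hφP]
      exact Polynomial.deriv (p := Lagrange.basis Finset.univ τ p)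
    rw [this]; exact (Lagrange.basis Finset.univ τ p).derivative.continuous_aeval
  have hφC : ∀ p, Continuous (φ p) := by
    intro p; rw [hφP]; exact (Lagrange.basis Finset.univ τ p).continuous_aeval
  -- sum of ψt is 1
  have hψtsum : ∑ p, ψt p = 1 := by simp only [hψt]; exact hsum1 1
  -- double sum of κ is 1
  have hκsum : ∑ p, ∑ q, κ p q = 1 := by
    have hint : ∀ p q, IntervalIntegrable (fun x => deriv (φ p) x * φ q x)
        MeasureTheory.volume 0 1 := fun p q =>
      ((hderivC p).mul (hφC q)).intervalIntegrable 0 1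
    have key : ∑ p, ∑ q, (∫ x in (0:ℝ)..1, deriv (φ p) x * φ q x) = 0 := by
      have h1 : ∀ p, ∑ q, (∫ x in (0:ℝ)..1, deriv (φ p) x * φ q x)
          = ∫ x in (0:ℝ)..1, deriv (φ p) x := by
        intro p
        rw [← intervalIntegral.integral_finset_sum fun q _ => hint p q]
        refine intervalIntegral.integral_congr fun x _ => ?_
        rw [← Finset.mul_sum, hsum1 x, mul_one]
      simp only [h1]
      rw [← intervalIntegral.integral_finset_sum fun p _ =>
        (hderivC p).intervalIntegrable 0 1]
      simp only [hderiv0]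
      simp
    have : ∑ p, ∑ q, κ p q = (∑ p, ψt p) * (∑ q, ψt q)
        - ∑ p, ∑ q, (∫ x in (0:ℝ)..1, deriv (φ p) x * φ q x) := by
      rw [Finset.sum_mul_sum, ← Finset.sum_sub_distrib]
      refine Finset.sum_congr rfl fun p _ => ?_
      rw [← Finset.sum_sub_distrib]
      exact Finset.sum_congr rfl fun q _ => hκ p q
    rw [this, key, hψtsum]; ring
  -- invertibility of a
  have hdw : IsUnit (Matrix.diagonal w).det := by
    rw [Matrix.det_diagonal]
    exact isUnit_iff_ne_zero.mpr (Finset.prod_ne_zero_iff.mpr fun p _ => hwne p)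
  have hdeta : IsUnit a.det := by
    rw [ha, Matrix.det_mul]
    exact (κ.isUnit_nonsing_inv_det hinv).mul hdw
  -- formula for a⁻¹
  have hainv : a⁻¹ = Matrix.diagonal (fun p => (w p)⁻¹) * κ := by
    have hdi : (Matrix.diagonal w)⁻¹ = Matrix.diagonal (fun p => (w p)⁻¹) := by
      refine Matrix.inv_eq_right_inv ?_
      rw [Matrix.diagonal_mul_diagonal]
      have : (fun i => w i * (w i)⁻¹) = fun _ : Fin (N+1) => (1:ℝ) :=
        funext fun i => mul_inv_cancel₀ (hwne i)
      rw [this, Matrix.diagonal_one]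
    rw [ha, Matrix.mul_inv_rev, κ.nonsing_inv_nonsing_inv hinv, hdi]
  have hainv' : ∀ p q, a⁻¹ p q = (w p)⁻¹ * κ p q := by
    intro p q; rw [hainv, Matrix.diagonal_mul]
  -- the double sum
  have hds : ∑ p, ∑ q, w p * a⁻¹ p q = 1 := by
    rw [← hκsum]
    refine Finset.sum_congr rfl fun p _ => Finset.sum_congr rfl fun q _ => ?_
    rw [hainv' p q, ← mul_assoc, mul_inv_cancel₀ (hwne p), one_mul]
  -- dot product formula
  have hdot : ∀ (M : Matrix (Fin (N+1)) (Fin (N+1)) ℝ),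
      w ⬝ᵥ M.mulVec (fun _ => (1:ℝ)) = ∑ p, ∑ q, w p * M p q := by
    intro M
    simp [dotProduct, Matrix.mulVec, Finset.mul_sum]
  have hdot1 : 1 - w ⬝ᵥ a⁻¹.mulVec (fun _ => (1:ℝ)) = 0 := by
    rw [hdot, hds]; ring
  -- the limit function
  set g : ℝ → ℝ := fun s => 1 - w ⬝ᵥ (a - s • 1)⁻¹.mulVec (fun _ => (1:ℝ)) with hg
  have hg0 : g 0 = 0 := by
    simp only [hg, zero_smul, sub_zero]
    exact hdot1
  have hgc : ContinuousAt g 0 := by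
    have h1 : ContinuousAt (fun s : ℝ => a - s • (1 : Matrix (Fin (N+1)) (Fin (N+1)) ℝ)) 0 :=
      (continuous_const.sub (continuous_id.smul continuous_const)).continuousAt
    have h2 : ContinuousAt Inv.inv a := by
      refine continuousAt_matrix_inv a ?_
      have : (Ring.inverse : ℝ → ℝ) = Inv.inv := by
        funext x; exact Ring.inverse_eq_inv x
      rw [this]
      exact continuousAt_inv₀ hdeta.ne_zero
    have h3 : ContinuousAt (fun s : ℝ => (a - s • 1)⁻¹) 0 := by
      have h2' : ContinuousAt Inv.inv
          (a - (0:ℝ) • (1 : Matrix (Fin (N+1)) (Fin (N+1)) ℝ)) := by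
        simpa using h2
      exact ContinuousAt.comp h2' h1
    have h4 : Continuous (fun M : Matrix (Fin (N+1)) (Fin (N+1)) ℝ =>
        w ⬝ᵥ M.mulVec (fun _ => (1:ℝ))) := by
      simp only [hdot]
      exact continuous_finset_sum _ fun p _ => continuous_finset_sum _ fun q _ =>
        continuous_const.mul ((continuous_apply q).comp (continuous_apply p))
    exact continuousAt_const.sub (h4.continuousAt.comp h3)
  -- eventual equality of R and g ∘ inv
  have hRg : ∀ z : ℝ, z ≠ 0 → IsUnit (a - z⁻¹ • 1).det → R z = g z⁻¹ := by
    intro z hz hB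
    set B := a - z⁻¹ • (1 : Matrix (Fin (N+1)) (Fin (N+1)) ℝ) with hBdef
    have hfac : (1 : Matrix (Fin (N+1)) (Fin (N+1)) ℝ) - z • a = (-z) • B := by
      rw [hBdef, smul_sub, smul_smul, neg_mul, mul_inv_cancel₀ hz, neg_smul z a,
        neg_smul (1:ℝ), one_smul, sub_neg_eq_add]
      abel
    have hIinv : ((1 : Matrix (Fin (N+1)) (Fin (N+1)) ℝ) - z • a)⁻¹ = (-z)⁻¹ • B⁻¹ := by
      rw [hfac]
      refine Matrix.inv_eq_right_inv ?_
      rw [Matrix.smul_mul, Matrix.mul_smul, smul_smul,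
        mul_inv_cancel₀ (neg_ne_zero.mpr hz), Matrix.mul_nonsing_inv B hB, one_smul]
    rw [hR, hIinv, hg]
    rw [Matrix.smul_mulVec, dotProduct_smul]
    have : z * ((-z)⁻¹ • (w ⬝ᵥ B⁻¹.mulVec fun _ => (1:ℝ)))
        = -(w ⬝ᵥ B⁻¹.mulVec fun _ => (1:ℝ)) := by
      rw [smul_eq_mul, ← mul_assoc, inv_neg, mul_neg, mul_inv_cancel₀ hz]
      ring
    rw [this]
    ring
  -- eventual invertibility
  have hopen : IsOpen {s : ℝ | IsUnit (a - s • (1:Matrix (Fin (N+1)) (Fin (N+1)) ℝ)).det} := by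
    have hcont : Continuous fun s : ℝ =>
        (a - s • (1:Matrix (Fin (N+1)) (Fin (N+1)) ℝ)).det :=
      Continuous.matrix_det (continuous_const.sub (continuous_id.smul continuous_const))
    have : {s : ℝ | IsUnit (a - s • (1:Matrix (Fin (N+1)) (Fin (N+1)) ℝ)).det}
        = (fun s : ℝ => (a - s • (1:Matrix (Fin (N+1)) (Fin (N+1)) ℝ)).det) ⁻¹' {x | x ≠ 0} := by
      ext s; simp [isUnit_iff_ne_zero]
    rw [this]
    exact hcont.isOpen_preimage _ (isOpen_ne)
  have hmem : (0:ℝ) ∈ {s : ℝ | IsUnit (a - s • (1:Matrix (Fin (N+1)) (Fin (N+1)) ℝ)).det} := by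
    simp only [Set.mem_setOf_eq, zero_smul, sub_zero]
    exact hdeta
  have hnhds : {s : ℝ | IsUnit (a - s • (1:Matrix (Fin (N+1)) (Fin (N+1)) ℝ)).det} ∈ nhds (0:ℝ) :=
    hopen.mem_nhds hmem
  have hinvTop : Tendsto (fun z : ℝ => z⁻¹) atTop (nhds 0) := tendsto_inv_atTop_zero
  have hinvBot : Tendsto (fun z : ℝ => z⁻¹) atBot (nhds 0) := by
    have h := (tendsto_inv_atTop_zero.comp tendsto_neg_atBot_atTop (α := ℝ)).neg
    rw [neg_zero] at h
    refine h.congr fun z => ?_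
    simp [inv_neg]
  have hTop : Tendsto R atTop (nhds 0) := by
    have h1 : Tendsto (fun z : ℝ => g z⁻¹) atTop (nhds 0) := by
      have := hgc.tendsto.comp hinvTop
      rwa [hg0] at this
    refine Tendsto.congr' ?_ h1
    have hev1 : ∀ᶠ z : ℝ in atTop, z ≠ 0 := eventually_ne_atTop 0
    have hev2 : ∀ᶠ z : ℝ in atTop, IsUnit (a - z⁻¹ • (1:Matrix (Fin (N+1)) (Fin (N+1)) ℝ)).det :=
      hinvTop.eventually_mem hnhds
    filter_upwards [hev1, hev2] with z hz hB
    exact (hRg z hz hB).symm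
  have hBot : Tendsto R atBot (nhds 0) := by
    have h1 : Tendsto (fun z : ℝ => g z⁻¹) atBot (nhds 0) := by
      have := hgc.tendsto.comp hinvBot
      rwa [hg0] at this
    refine Tendsto.congr' ?_ h1
    have hev1 : ∀ᶠ z : ℝ in atBot, z ≠ 0 := eventually_ne_atBot 0
    have hev2 : ∀ᶠ z : ℝ in atBot, IsUnit (a - z⁻¹ • (1:Matrix (Fin (N+1)) (Fin (N+1)) ℝ)).det :=
      hinvBot.eventually_mem hnhds
    filter_upwards [hev1, hev2] with z hz hB
    exact (hRg z hz hB).symm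
  exact ⟨hdeta, hds, hdot1, hTop, hBot⟩
end
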